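/- arXiv:1512.02844 — 7 statements merged into one kernel-verified Lean document; each statement's English description precedes it below -/
import Mathlib

section
/- Let n ≥ 3 and S = {f, rf} in the dihedral group D_n. Then λ₁(D_n, S) ≤ n; moreover λ₁(D_n, S) = n if n is odd, and λ₁(D_n, S) = n − 1 if n is even. -/
open DihedralGroup

/-- The word length of `g` with respect to a generating set `S`: the minimal
number of letters of `S` needed to write `g` as a product. -/
noncomputable def wordLength {G : Type*} [Group G] (S : Set G) (g : G) : ℕ :=
  sInf {k | ∃ l : List G, (∀ x ∈ l, x ∈ S) ∧ l.prod = g ∧ l.length = k}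

namespace Stmt9Aux

variable {n : ℕ}

lemma inv_r (i : ZMod n) : (r i)⁻¹ = r (-i) := rfl

lemma inv_sr (i : ZMod n) : (sr i)⁻¹ = sr i := rfl

lemma b_eq : (r 1 * sr 0 : DihedralGroup n) = sr (-1) := by
  rw [r_mul_sr, zero_sub]

lemma mem_S_iff (x : DihedralGroup n) :
    x ∈ ({sr 0, r 1 * sr 0} : Set (DihedralGroup n)) ↔ (x = sr 0 ∨ x = sr (-1)) := by
  rw [b_eq]; simp [Set.mem_insert_iff]

/-- Alternating word `a b a b ... a` with product `sr k`. -/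
def wa (n : ℕ) : ℕ → List (DihedralGroup n)
  | 0 => [sr 0]
  | k+1 => sr 0 :: sr (-1) :: wa n k

/-- Alternating word `b a b a ... b` with product `sr (-1-k)`. -/
def wb (n : ℕ) : ℕ → List (DihedralGroup n)
  | 0 => [sr (-1)]
  | k+1 => sr (-1) :: sr 0 :: wb n k

lemma wa_length (k : ℕ) : (wa n k).length = 2*k+1 := by
  induction k with
  | zero => rfl
  | succ k ih => simp only [wa, List.length_cons, ih]; omega

lemma wb_length (k : ℕ) : (wb n k).length = 2*k+1 := by
  induction k with
  | zero => rfl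
  | succ k ih => simp only [wb, List.length_cons, ih]; omega

lemma wa_mem (k : ℕ) : ∀ x ∈ wa n k, x = sr 0 ∨ x = sr (-1) := by
  induction k with
  | zero => intro x hx; simp only [wa, List.mem_singleton] at hx; exact Or.inl hx
  | succ k ih =>
    intro x hx
    simp only [wa, List.mem_cons] at hx
    rcases hx with h | h | h
    · exact Or.inl h
    · exact Or.inr h
    · exact ih x h

lemma wb_mem (k : ℕ) : ∀ x ∈ wb n k, x = sr 0 ∨ x = sr (-1) := by
  induction k with
  | zero => intro x hx; simp only [wb, List.mem_singleton] at hx; exact Or.inr hx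
  | succ k ih =>
    intro x hx
    simp only [wb, List.mem_cons] at hx
    rcases hx with h | h | h
    · exact Or.inr h
    · exact Or.inl h
    · exact ih x h

lemma wa_prod (k : ℕ) : (wa n k).prod = sr ((k : ℕ) : ZMod n) := by
  induction k with
  | zero => simp [wa]
  | succ k ih =>
    simp only [wa, List.prod_cons, ih, sr_mul_sr, sr_mul_r]
    congr 1
    push_cast
    ring

lemma wb_prod (k : ℕ) : (wb n k).prod = sr (-1 - ((k : ℕ) : ZMod n)) := by
  induction k with
  | zero => simp [wb]
  | succ k ih =>
    simp only [wb, List.prod_cons, ih, sr_mul_sr, sr_mul_r]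
    congr 1
    push_cast
    ring

/-- The key invariant: a word of length `m` in the letters `sr 0`, `sr (-1)` has product
`r c` (for even `m`, with `-m ≤ 2c ≤ m`) or `sr c` (for odd `m`, with `-m-1 ≤ 2c ≤ m-1`),
for an integer `c`. -/
lemma prod_form (l : List (DihedralGroup n)) (hl : ∀ x ∈ l, x = sr 0 ∨ x = sr (-1)) :
    ∃ c : ℤ,
      (Even l.length ∧ l.prod = r ((c : ℤ) : ZMod n) ∧ -(l.length : ℤ) ≤ 2*c ∧ 2*c ≤ l.length)
      ∨ (Odd l.length ∧ l.prod = sr ((c : ℤ) : ZMod n) ∧ -(l.length : ℤ) - 1 ≤ 2*c ∧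
          2*c ≤ (l.length : ℤ) - 1) := by
  induction l with
  | nil =>
    refine ⟨0, Or.inl ⟨Even.zero, ?_, by norm_num, by norm_num⟩⟩
    simp
  | cons x t ih =>
    obtain ⟨c, hc⟩ := ih (fun y hy => hl y (List.mem_cons_of_mem x hy))
    have hx := hl x (List.mem_cons_self)
    have hlen : (x :: t).length = t.length + 1 := List.length_cons
    rcases hx with rfl | rfl <;>
      rcases hc with ⟨he, hp, h1, h2⟩ | ⟨he, hp, h1, h2⟩ <;>
      obtain ⟨m, hm⟩ := he
    · -- sr 0 * r c = sr (0 + c)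
      refine ⟨c, Or.inr ⟨⟨m, by omega⟩, ?_, ?_, ?_⟩⟩
      · simp [hp]
      · rw [hlen]; push_cast; omega
      · rw [hlen]; push_cast; omega
    · -- sr 0 * sr c = r (c - 0)
      refine ⟨c, Or.inl ⟨⟨m+1, by omega⟩, ?_, ?_, ?_⟩⟩
      · simp [hp]
      · rw [hlen]; push_cast; omega
      · rw [hlen]; push_cast; omega
    · -- sr (-1) * r c = sr (-1 + c)
      refine ⟨c - 1, Or.inr ⟨⟨m, by omega⟩, ?_, ?_, ?_⟩⟩
      · simp only [List.prod_cons, hp, sr_mul_r]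
        congr 1
        push_cast
        ring
      · rw [hlen]; push_cast; omega
      · rw [hlen]; push_cast; omega
    · -- sr (-1) * sr c = r (c + 1)
      refine ⟨c + 1, Or.inl ⟨⟨m+1, by omega⟩, ?_, ?_, ?_⟩⟩
      · simp only [List.prod_cons, hp, sr_mul_sr]
        congr 1
        push_cast
        ring
      · rw [hlen]; push_cast; omega
      · rw [hlen]; push_cast; omega

lemma wordLength_sr [NeZero n] (j : ZMod n) :
    wordLength ({sr 0, r 1 * sr 0} : Set (DihedralGroup n)) (sr j)
      = 2 * min j.val (n - 1 - j.val) + 1 := by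
  have hn1 : 1 ≤ n := Nat.one_le_iff_ne_zero.mpr (NeZero.ne n)
  have hjlt : j.val < n := ZMod.val_lt j
  have hjv : ((j.val : ℕ) : ZMod n) = j := ZMod.natCast_rightInverse j
  set T : Set ℕ :=
    {k | ∃ l : List (DihedralGroup n),
      (∀ x ∈ l, x ∈ ({sr 0, r 1 * sr 0} : Set (DihedralGroup n))) ∧
        l.prod = sr j ∧ l.length = k} with hT
  have hA : (2 * j.val + 1) ∈ T := by
    refine ⟨wa n j.val, fun x hx => (mem_S_iff x).2 (wa_mem _ x hx), ?_, wa_length _⟩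
    rw [wa_prod, hjv]
  have hB : (2 * (n - 1 - j.val) + 1) ∈ T := by
    refine ⟨wb n (n - 1 - j.val), fun x hx => (mem_S_iff x).2 (wb_mem _ x hx), ?_, wb_length _⟩
    rw [wb_prod]
    congr 1
    have h1 : (n - 1 - j.val) + (1 + j.val) = n := by omega
    have h2 := congrArg (Nat.cast : ℕ → ZMod n) h1
    push_cast at h2
    rw [ZMod.natCast_self] at h2
    linear_combination -h2 + hjv
  show sInf T = _
  apply le_antisymm
  · rcases le_total j.val (n - 1 - j.val) with h | h
    · rw [min_eq_left h]; exact Nat.sInf_le hA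
    · rw [min_eq_right h]; exact Nat.sInf_le hB
  · apply le_csInf ⟨_, hA⟩
    rintro k ⟨l, hl, hprod, rfl⟩
    obtain ⟨c, hc⟩ := prod_form l (fun x hx => (mem_S_iff x).1 (hl x hx))
    rcases hc with ⟨_, hp, _, _⟩ | ⟨_, hp, h1, h2⟩
    · rw [hprod] at hp; exact absurd hp (by simp)
    · rw [hprod] at hp
      have hcj : ((c : ℤ) : ZMod n) = j := by
        injection hp.symm
      have hmod : (n : ℤ) ∣ (j.val : ℤ) - c := by
        have hzz : ((c : ℤ) : ZMod n) = (((j.val : ℤ)) : ZMod n) := by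
          push_cast
          rw [hjv]
          exact hcj
        exact Int.ModEq.dvd ((ZMod.intCast_eq_intCast_iff _ _ _).mp hzz)
      obtain ⟨m, hm⟩ := hmod
      rcases le_or_gt m 0 with hm0 | hm0
      · have hge : (j.val : ℤ) ≤ c := by
          have h0 : (n : ℤ) * m ≤ 0 :=
            mul_nonpos_of_nonneg_of_nonpos (by positivity) (by exact_mod_cast hm0)
          linarith
        omega
      · have hle : c ≤ (j.val : ℤ) - n := by
          have h0 : (n : ℤ) * 1 ≤ (n : ℤ) * m :=
            mul_le_mul_of_nonneg_left (by omega) (by positivity)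
          linarith
        omega

lemma conj_sr (g : DihedralGroup n) (t : ZMod n) :
    ∃ u : ZMod n, g * sr t * g⁻¹ = sr u := by
  rcases g with i | i
  · exact ⟨t - i + -i, rfl⟩
  · exact ⟨i - (t - i), rfl⟩

lemma exists_conj (j : ZMod n) [NeZero n] :
    ∃ g : DihedralGroup n, ∃ s ∈ ({sr 0, r 1 * sr 0} : Set (DihedralGroup n)),
      g * s * g⁻¹ = sr j := by
  have hjv : ((j.val : ℕ) : ZMod n) = j := ZMod.natCast_rightInverse j
  rcases Nat.even_or_odd j.val with ⟨i, hi⟩ | ⟨i, hi⟩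
  · refine ⟨r (-(i : ZMod n)), sr 0, Or.inl rfl, ?_⟩
    show sr (0 - -(i : ZMod n) + - -(i : ZMod n)) = sr j
    congr 1
    rw [← hjv, hi]
    push_cast
    ring
  · refine ⟨r (-((i : ZMod n) + 1)), r 1 * sr 0, Or.inr rfl, ?_⟩
    rw [b_eq]
    show sr (-1 - -((i : ZMod n) + 1) + - -((i : ZMod n) + 1)) = sr j
    congr 1
    rw [← hjv, hi]
    push_cast
    ring

end Stmt9Aux

open Stmt9Aux in
theorem stmt9 (n : ℕ) (hn : 3 ≤ n) :
    letI S : Set (DihedralGroup n) := {sr 0, r 1 * sr 0}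
    (∀ g : DihedralGroup n, ∀ s ∈ S, wordLength S (g * s * g⁻¹) ≤ n) ∧
      (Odd n → IsGreatest
        {k | ∃ g : DihedralGroup n, ∃ s ∈ S, k = wordLength S (g * s * g⁻¹)} n) ∧
      (Even n → IsGreatest
        {k | ∃ g : DihedralGroup n, ∃ s ∈ S, k = wordLength S (g * s * g⁻¹)} (n - 1)) := by
  haveI : NeZero n := ⟨by omega⟩
  have key : ∀ g : DihedralGroup n, ∀ s ∈ ({sr 0, r 1 * sr 0} : Set (DihedralGroup n)),
      ∃ u : ZMod n, g * s * g⁻¹ = sr u := by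
    intro g s hs
    rcases (mem_S_iff s).1 hs with rfl | rfl
    · exact conj_sr g 0
    · exact conj_sr g (-1)
  refine ⟨?_, ?_, ?_⟩
  · intro g s hs
    obtain ⟨u, hu⟩ := key g s hs
    rw [hu, wordLength_sr]
    have := ZMod.val_lt u
    omega
  · intro hodd
    obtain ⟨m, hm⟩ := hodd
    constructor
    · obtain ⟨g, s, hs, hgs⟩ := exists_conj ((((n - 1) / 2 : ℕ)) : ZMod n)
      refine ⟨g, s, hs, ?_⟩
      rw [hgs, wordLength_sr]
      rw [ZMod.val_natCast_of_lt (by omega)]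
      omega
    · rintro k ⟨g, s, hs, rfl⟩
      obtain ⟨u, hu⟩ := key g s hs
      rw [hu, wordLength_sr]
      have := ZMod.val_lt u
      omega
  · intro heven
    obtain ⟨m, hm⟩ := heven
    constructor
    · obtain ⟨g, s, hs, hgs⟩ := exists_conj (((n / 2 : ℕ)) : ZMod n)
      refine ⟨g, s, hs, ?_⟩
      rw [hgs, wordLength_sr]
      rw [ZMod.val_natCast_of_lt (by omega)]
      omega
    · rintro k ⟨g, s, hs, rfl⟩
      obtain ⟨u, hu⟩ := key g s hs
      rw [hu, wordLength_sr]
      have := ZMod.val_lt u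
      omega
end

section
/- Let n ≥ 3 and S = {f, rf} in the dihedral group D_n. Then λ₂(D_n, S) = 2. -/
open DihedralGroup

lemma inv_r' {n : ℕ} (i : ZMod n) : (r i)⁻¹ = r (-i) := rfl
lemma inv_sr' {n : ℕ} (i : ZMod n) : (sr i)⁻¹ = sr i := rfl

lemma wordLength_le {G : Type*} [Group G] (S : Set G) (l : List G)
    (hl : ∀ x ∈ l, x ∈ S) : wordLength S l.prod ≤ l.length :=
  Nat.sInf_le ⟨l, hl, rfl, rfl⟩

theorem stmt10 (n : ℕ) (hn : 3 ≤ n) :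
    letI S : Set (DihedralGroup n) := {sr 0, r 1 * sr 0}
    IsGreatest {k | ∃ g : DihedralGroup n, ∃ s ∈ S, ∃ s' ∈ S,
        k = wordLength S (g * s * s' * g⁻¹)} 2 := by
  set S : Set (DihedralGroup n) := {sr 0, r 1 * sr 0} with hSdef
  haveI : NeZero n := ⟨by omega⟩
  have hS2 : (r 1 * sr 0 : DihedralGroup n) = sr (-1) := by
    simp
  have hone' : (1 : ZMod n) ≠ 0 := by
    intro h
    have := ZMod.val_cast_of_lt (show 1 < n by omega)
    simp [h] at this
  have hone : (-1 : ZMod n) ≠ 0 := fun h => hone' (by linear_combination -h)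
  have hmem0 : sr (0 : ZMod n) ∈ S := Or.inl rfl
  have hmem1 : sr (-1 : ZMod n) ∈ S := Or.inr hS2.symm
  -- every relevant element has word length ≤ 2
  have key : ∀ x : DihedralGroup n, (x = 1 ∨ x = r 1 ∨ x = r (-1)) →
      wordLength S x ≤ 2 := by
    rintro x (rfl | rfl | rfl)
    · have := wordLength_le S [] (by simp)
      simp at this
      omega
    · have := wordLength_le S [sr (-1), sr 0] (by
        rintro x hx
        simp only [List.mem_cons, List.not_mem_nil, or_false] at hx
        rcases hx with rfl | rfl
        exacts [hmem1, hmem0])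
      simpa using this
    · have := wordLength_le S [sr 0, sr (-1)] (by
        rintro x hx
        simp only [List.mem_cons, List.not_mem_nil, or_false] at hx
        rcases hx with rfl | rfl
        exacts [hmem0, hmem1])
      simpa using this
  have hw1 : wordLength S (r (-1) : DihedralGroup n) = 2 := by
    refine le_antisymm (key _ (Or.inr (Or.inr rfl))) ?_
    refine le_csInf ⟨2, [sr 0, sr (-1)], ?_, by simp, rfl⟩ ?_
    · rintro x hx
      simp only [List.mem_cons, List.not_mem_nil, or_false] at hx
      rcases hx with rfl | rfl
      exacts [hmem0, hmem1]
    · rintro k ⟨l, hl, hprod, rfl⟩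
      by_contra h
      push_neg at h
      rcases l with _ | ⟨a, _ | ⟨b, t⟩⟩
      · rw [List.prod_nil, one_def] at hprod
        exact hone (by injection hprod.symm)
      · rw [List.prod_cons, List.prod_nil, mul_one] at hprod
        have := hl a (by simp)
        rcases this with rfl | h2
        · exact absurd hprod (by simp)
        · rw [hS2] at h2; subst h2; exact absurd hprod (by simp)
      · simp at h
  have hconj : ∀ (g s s' : DihedralGroup n), s ∈ S → s' ∈ S →
      (g * s * s' * g⁻¹ = 1 ∨ g * s * s' * g⁻¹ = r 1 ∨ g * s * s' * g⁻¹ = r (-1)) := by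
    rintro g s s' hs hs'
    rw [hSdef] at hs hs'
    simp only [Set.mem_insert_iff, Set.mem_singleton_iff, hS2] at hs hs'
    rcases hs with rfl | rfl <;> rcases hs' with rfl | rfl <;> rcases g with j | j <;>
      simp [inv_r', inv_sr', r.injEq]
  constructor
  · refine ⟨1, sr 0, hmem0, r 1 * sr 0, Or.inr rfl, ?_⟩
    rw [hS2]
    have : (1 : DihedralGroup n) * sr 0 * sr (-1) * 1⁻¹ = r (-1) := by
      simp [inv_r']
    rw [this, hw1]
  · rintro k ⟨g, s, hs, s', hs', rfl⟩
    exact key _ (hconj g s s' hs hs')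
end

section
/- Let n be even, n ≥ 6, and S = {f, rf, r^{n/2}} in D_n. Then λ₁(D_n, S) = n/2. -/
open DihedralGroup

namespace Stmt13Aux

/-- The generating set. -/
def Sgen (n : ℕ) : Set (DihedralGroup n) :=
  {sr 0, r 1 * sr 0, (r 1 : DihedralGroup n) ^ (n / 2)}

/-- Exact word length of `r m` (with `m = val`). -/
def Ff (n m : ℕ) : ℕ :=
  min (2 * min m (n - m)) (2 * ((m - n / 2) + (n / 2 - m)) + 1)

/-- Exact word length of `sr m` (with `m = val`). -/
def Gg (n m : ℕ) : ℕ :=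
  min (2 * min m (n - 1 - m) + 1)
    (2 * min (if m < n / 2 then m + n / 2 else m - n / 2)
      (n - 1 - if m < n / 2 then m + n / 2 else m - n / 2) + 2)

/-- Lower bound function. -/
def Lf (n : ℕ) : DihedralGroup n → ℕ
  | DihedralGroup.r x => Ff n x.val
  | DihedralGroup.sr x => Gg n x.val

@[simp] lemma Lf_r {n : ℕ} (x : ZMod n) : Lf n (r x) = Ff n x.val := rfl
@[simp] lemma Lf_sr {n : ℕ} (x : ZMod n) : Lf n (sr x) = Gg n x.val := rfl

lemma valAddNat {n : ℕ} [NeZero n] (x : ZMod n) (k : ℕ) (hk : k < n) :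
    (x + (k : ZMod n)).val = x.val + k ∨
      ((x + (k : ZMod n)).val = x.val + k - n ∧ n ≤ x.val + k) := by
  rw [ZMod.val_add, ZMod.val_natCast, Nat.mod_eq_of_lt hk]
  rcases lt_or_ge (x.val + k) n with h | h
  · exact Or.inl (Nat.mod_eq_of_lt h)
  · refine Or.inr ⟨?_, h⟩
    rw [Nat.mod_eq_sub_mod h, Nat.mod_eq_of_lt (by have := x.val_lt; omega)]

section NatLemmas

variable {n m m' : ℕ}

set_option maxHeartbeats 1000000

lemma k1 (hn : 6 ≤ n) (hd : 2 ∣ n) (hm : m < n) : Gg n m ≤ Ff n m + 1 := by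
  simp only [Gg, Ff]; split_ifs <;> omega

lemma k2 (hn : 6 ≤ n) (hd : 2 ∣ n) (hm : m < n) : Ff n m ≤ Gg n m + 1 := by
  simp only [Gg, Ff]; split_ifs <;> omega

lemma k3 (hn : 6 ≤ n) (hd : 2 ∣ n) (hm : m < n)
    (hm' : m' = m + (n - 1) ∨ (m' = m + (n - 1) - n ∧ n ≤ m + (n - 1))) :
    Gg n m' ≤ Ff n m + 1 := by
  simp only [Gg, Ff]; split_ifs <;> omega

lemma k4 (hn : 6 ≤ n) (hd : 2 ∣ n) (hm : m < n)
    (hm' : m' = m + 1 ∨ (m' = m + 1 - n ∧ n ≤ m + 1)) :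
    Ff n m' ≤ Gg n m + 1 := by
  simp only [Gg, Ff]; split_ifs <;> omega

lemma k5 (hn : 6 ≤ n) (hd : 2 ∣ n) (hm : m < n)
    (hm' : m' = m + n / 2 ∨ (m' = m + n / 2 - n ∧ n ≤ m + n / 2)) :
    Ff n m' ≤ Ff n m + 1 := by
  simp only [Gg, Ff]; omega

lemma k6 (hn : 6 ≤ n) (hd : 2 ∣ n) (hm : m < n)
    (hm' : m' = m + n / 2 ∨ (m' = m + n / 2 - n ∧ n ≤ m + n / 2)) :
    Gg n m' ≤ Gg n m + 1 := by
  simp only [Gg, Ff]; split_ifs <;> omega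

lemma gg_target (hn : 6 ≤ n) (hd : 2 ∣ n) : Gg n (n / 2 / 2) = n / 2 := by
  simp only [Gg]; split_ifs <;> omega

end NatLemmas

section Words

variable {n : ℕ}

lemma rs : (r 1 : DihedralGroup n) * sr 0 = sr (-1) := by
  rw [r_mul_sr, zero_sub]

lemma rc : (r 1 : DihedralGroup n) ^ (n / 2) = r ((n / 2 : ℕ) : ZMod n) :=
  r_one_pow _

/-- word for `sr m` of length `2m+1`. -/
def wA (n : ℕ) : ℕ → List (DihedralGroup n)
  | 0 => [sr 0]
  | m + 1 => sr 0 :: (r 1 * sr 0) :: wA n m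

/-- word for `sr (-1-m)` of length `2m+1`. -/
def wB (n : ℕ) : ℕ → List (DihedralGroup n)
  | 0 => [r 1 * sr 0]
  | m + 1 => (r 1 * sr 0) :: sr 0 :: wB n m

lemma wA_length (m : ℕ) : (wA n m).length = 2 * m + 1 := by
  induction m with
  | zero => rfl
  | succ m ih => simp only [wA, List.length_cons, ih]; omega

lemma wB_length (m : ℕ) : (wB n m).length = 2 * m + 1 := by
  induction m with
  | zero => rfl
  | succ m ih => simp only [wB, List.length_cons, ih]; omega

lemma wA_mem (m : ℕ) : ∀ x ∈ wA n m, x ∈ Sgen n := by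
  induction m with
  | zero =>
    intro x hx
    simp only [wA, List.mem_singleton] at hx
    subst hx; simp [Sgen]
  | succ m ih =>
    intro x hx
    simp only [wA, List.mem_cons] at hx
    rcases hx with rfl | rfl | hx
    · simp [Sgen]
    · simp [Sgen]
    · exact ih x hx

lemma wB_mem (m : ℕ) : ∀ x ∈ wB n m, x ∈ Sgen n := by
  induction m with
  | zero =>
    intro x hx
    simp only [wB, List.mem_singleton] at hx
    subst hx; simp [Sgen]
  | succ m ih =>
    intro x hx
    simp only [wB, List.mem_cons] at hx
    rcases hx with rfl | rfl | hx
    · simp [Sgen]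
    · simp [Sgen]
    · exact ih x hx

lemma wA_prod (m : ℕ) : (wA n m).prod = sr ((m : ℕ) : ZMod n) := by
  induction m with
  | zero => simp [wA]
  | succ m ih =>
    rw [wA, List.prod_cons, List.prod_cons, ih, rs, sr_mul_sr, sr_mul_r]
    congr 1
    push_cast
    ring

lemma wB_prod (m : ℕ) : (wB n m).prod = sr (-1 - (m : ℕ) : ZMod n) := by
  induction m with
  | zero => simp [wB, rs]
  | succ m ih =>
    rw [wB, List.prod_cons, List.prod_cons, ih, rs, sr_mul_sr, sr_mul_r]
    congr 1
    push_cast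
    ring

end Words

section Main

variable {n : ℕ}

lemma wl_le {G : Type*} [Group G] {S : Set G} {g : G} (l : List G)
    (hmem : ∀ x ∈ l, x ∈ S) (hp : l.prod = g) : wordLength S g ≤ l.length :=
  Nat.sInf_le ⟨l, hmem, hp, rfl⟩

lemma half_add_half (hn : 6 ≤ n) (hd : 2 ∣ n) :
    ((n / 2 : ℕ) : ZMod n) + ((n / 2 : ℕ) : ZMod n) = 0 := by
  rw [← Nat.cast_add, show n / 2 + n / 2 = n by omega, ZMod.natCast_self]

lemma neg_half (hn : 6 ≤ n) (hd : 2 ∣ n) :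
    -((n / 2 : ℕ) : ZMod n) = ((n / 2 : ℕ) : ZMod n) :=
  neg_eq_of_add_eq_zero_left (half_add_half hn hd)

lemma key (hn : 6 ≤ n) (hd : 2 ∣ n) (s : DihedralGroup n) (hs : s ∈ Sgen n)
    (g : DihedralGroup n) : Lf n (s * g) ≤ Lf n g + 1 := by
  haveI : NeZero n := ⟨by omega⟩
  have hneg : ((n - 1 : ℕ) : ZMod n) = -1 := by
    rw [Nat.cast_sub (by omega), ZMod.natCast_self, Nat.cast_one]; ring
  rcases hs with rfl | rfl | rfl
  · cases g with
    | r x =>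
      rw [sr_mul_r, zero_add, Lf_sr, Lf_r]
      exact k1 hn hd x.val_lt
    | sr x =>
      rw [sr_mul_sr, sub_zero, Lf_r, Lf_sr]
      exact k2 hn hd x.val_lt
  · cases g with
    | r x =>
      rw [rs, sr_mul_r, show (-1 : ZMod n) + x = x + ((n - 1 : ℕ) : ZMod n) by
        rw [hneg]; ring, Lf_sr, Lf_r]
      exact k3 hn hd x.val_lt (valAddNat x (n - 1) (by omega))
    | sr x =>
      rw [rs, sr_mul_sr, sub_neg_eq_add, show x + (1 : ZMod n) = x + ((1 : ℕ) : ZMod n) by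
        norm_cast, Lf_r, Lf_sr]
      exact k4 hn hd x.val_lt (valAddNat x 1 (by omega))
  · cases g with
    | r x =>
      rw [rc, r_mul_r, add_comm, Lf_r, Lf_r]
      exact k5 hn hd x.val_lt (valAddNat x (n / 2) (by omega))
    | sr x =>
      rw [rc, r_mul_sr, sub_eq_add_neg, neg_half hn hd, Lf_sr, Lf_sr]
      exact k6 hn hd x.val_lt (valAddNat x (n / 2) (by omega))

lemma lb (hn : 6 ≤ n) (hd : 2 ∣ n) :
    ∀ l : List (DihedralGroup n), (∀ x ∈ l, x ∈ Sgen n) → Lf n l.prod ≤ l.length := by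
  haveI : NeZero n := ⟨by omega⟩
  intro l
  induction l with
  | nil =>
    intro _
    rw [List.prod_nil, one_def, Lf_r, ZMod.val_zero]
    simp [Ff]
  | cons a l ih =>
    intro hmem
    rw [List.prod_cons, List.length_cons]
    calc Lf n (a * l.prod) ≤ Lf n l.prod + 1 :=
          key hn hd a (hmem a List.mem_cons_self) l.prod
      _ ≤ l.length + 1 := by
          have := ih (fun x hx => hmem x (List.mem_cons_of_mem a hx))
          omega

lemma lf_le_wordLength (hn : 6 ≤ n) (hd : 2 ∣ n) (g : DihedralGroup n)
    (l : List (DihedralGroup n)) (hmem : ∀ x ∈ l, x ∈ Sgen n) (hp : l.prod = g) :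
    Lf n g ≤ wordLength (Sgen n) g := by
  apply le_csInf
  · exact ⟨l.length, l, hmem, hp, rfl⟩
  rintro k ⟨l', hl', hp', rfl⟩
  rw [← hp']
  exact lb hn hd l' hl'

lemma srBound (hn : 6 ≤ n) (hd : 2 ∣ n) (x : ZMod n) :
    wordLength (Sgen n) (sr x) ≤ n / 2 := by
  haveI : NeZero n := ⟨by omega⟩
  have hm : x.val < n := x.val_lt
  have hxm : ((x.val : ℕ) : ZMod n) = x := by rw [ZMod.natCast_val, ZMod.cast_id]
  have hn0 : ((n : ℕ) : ZMod n) = 0 := ZMod.natCast_self n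
  rcases lt_or_ge x.val (n / 2) with hlt | hge
  · -- words: wA x.val (length 2m+1), c :: wB (n/2-1-m) (length n - 2m)
    have w1 : wordLength (Sgen n) (sr x) ≤ 2 * x.val + 1 := by
      refine le_trans (wl_le (wA n x.val) (wA_mem _) ?_) (le_of_eq (wA_length _))
      rw [wA_prod, hxm]
    have w2 : wordLength (Sgen n) (sr x) ≤ 2 * (n / 2 - 1 - x.val) + 2 := by
      set t := n / 2 - 1 - x.val with htdef
      have ht : t + x.val + 1 = n / 2 := by omega
      refine le_trans (wl_le ((r 1 : DihedralGroup n) ^ (n / 2) :: wB n t) ?_ ?_) ?_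
      · intro y hy
        rcases List.mem_cons.mp hy with rfl | hy
        · simp [Sgen]
        · exact wB_mem _ y hy
      · rw [List.prod_cons, wB_prod, rc, r_mul_sr]
        congr 1
        have hz : ((t : ℕ) : ZMod n) + x.val + 1 = ((n / 2 : ℕ) : ZMod n) := by
          exact_mod_cast congrArg (fun k : ℕ => (k : ZMod n)) ht
        rw [← hxm]
        have h2 := half_add_half hn hd
        linear_combination -hz - h2
      · rw [List.length_cons, wB_length]
    have : 2 * x.val + 1 ≤ n / 2 ∨ 2 * (n / 2 - 1 - x.val) + 2 ≤ n / 2 := by omega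
    rcases this with h | h
    · exact w1.trans h
    · exact w2.trans h
  · have w1 : wordLength (Sgen n) (sr x) ≤ 2 * (n - 1 - x.val) + 1 := by
      set t := n - 1 - x.val with htdef
      have ht : t + x.val + 1 = n := by omega
      refine le_trans (wl_le (wB n t) (wB_mem _) ?_) (le_of_eq (wB_length _))
      rw [wB_prod]
      congr 1
      have hz : ((t : ℕ) : ZMod n) + x.val + 1 = ((n : ℕ) : ZMod n) := by
        exact_mod_cast congrArg (fun k : ℕ => (k : ZMod n)) ht
      rw [← hxm]
      linear_combination -hz - hn0
    have w2 : wordLength (Sgen n) (sr x) ≤ 2 * (x.val - n / 2) + 2 := by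
      set t := x.val - n / 2 with htdef
      have ht : t + n / 2 = x.val := by omega
      refine le_trans (wl_le ((r 1 : DihedralGroup n) ^ (n / 2) :: wA n t) ?_ ?_) ?_
      · intro y hy
        rcases List.mem_cons.mp hy with rfl | hy
        · simp [Sgen]
        · exact wA_mem _ y hy
      · rw [List.prod_cons, wA_prod, rc, r_mul_sr]
        congr 1
        have hz : ((t : ℕ) : ZMod n) + ((n / 2 : ℕ) : ZMod n) = ((x.val : ℕ) : ZMod n) := by
          exact_mod_cast congrArg (fun k : ℕ => (k : ZMod n)) ht
        rw [← hxm]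
        have h2 := half_add_half hn hd
        linear_combination hz - h2
      · rw [List.length_cons, wA_length]
    have : 2 * (n - 1 - x.val) + 1 ≤ n / 2 ∨ 2 * (x.val - n / 2) + 2 ≤ n / 2 := by omega
    rcases this with h | h
    · exact w1.trans h
    · exact w2.trans h

lemma inv_r (i : ZMod n) : (r i : DihedralGroup n)⁻¹ = r (-i) := by
  apply inv_eq_of_mul_eq_one_right
  rw [r_mul_r, add_neg_cancel]
  exact one_def.symm

lemma inv_sr (i : ZMod n) : (sr i : DihedralGroup n)⁻¹ = sr i :=
  inv_eq_of_mul_eq_one_right (sr_mul_self i)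

lemma central (hn : 6 ≤ n) (hd : 2 ∣ n) (g : DihedralGroup n) :
    g * (r 1 : DihedralGroup n) ^ (n / 2) * g⁻¹ = (r 1 : DihedralGroup n) ^ (n / 2) := by
  rw [rc]
  cases g with
  | r i =>
    rw [inv_r, r_mul_r, r_mul_r]
    congr 1
    ring
  | sr i =>
    rw [inv_sr, sr_mul_r, sr_mul_sr]
    congr 1
    have : i - (i + ((n / 2 : ℕ) : ZMod n)) = -((n / 2 : ℕ) : ZMod n) := by ring
    rw [this, neg_half hn hd]

end Main

end Stmt13Aux

open Stmt13Aux in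
theorem stmt13 (n : ℕ) (hn : 6 ≤ n) (heven : Even n) :
    letI S : Set (DihedralGroup n) := {sr 0, r 1 * sr 0, (r 1 : DihedralGroup n) ^ (n / 2)}
    IsGreatest {k | ∃ g : DihedralGroup n, ∃ s ∈ S,
        k = wordLength S (g * s * g⁻¹)} (n / 2) := by
  haveI : NeZero n := ⟨by omega⟩
  have hd : 2 ∣ n := heven.two_dvd
  show IsGreatest {k | ∃ g : DihedralGroup n, ∃ s ∈ Sgen n,
      k = wordLength (Sgen n) (g * s * g⁻¹)} (n / 2)
  constructor
  · -- membership: the conjugate sr m0 has word length exactly n/2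
    set m0 := n / 2 / 2 with hm0def
    have hm0lt : m0 < n := by omega
    have hval : ((m0 : ℕ) : ZMod n).val = m0 := ZMod.val_cast_of_lt hm0lt
    have hwl : wordLength (Sgen n) (sr ((m0 : ℕ) : ZMod n)) = n / 2 := by
      apply le_antisymm
      · exact srBound hn hd _
      · have := lf_le_wordLength hn hd (sr ((m0 : ℕ) : ZMod n)) (wA n m0)
          (wA_mem _) (wA_prod _)
        rw [Lf_sr, hval, gg_target hn hd] at this
        exact this
    rcases Nat.even_or_odd m0 with he | ho
    · obtain ⟨t, ht⟩ := he
      refine ⟨r (-(t : ZMod n)), sr 0, by simp [Sgen], ?_⟩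
      rw [Stmt13Aux.inv_r, neg_neg, r_mul_sr, sr_mul_r, ← hwl]
      congr 2
      rw [ht]
      push_cast
      ring
    · obtain ⟨t, ht⟩ := ho
      refine ⟨r (-((t : ZMod n) + 1)), r 1 * sr 0, by simp [Sgen], ?_⟩
      rw [rs, Stmt13Aux.inv_r, neg_neg, r_mul_sr, sr_mul_r, ← hwl]
      congr 2
      rw [ht]
      push_cast
      ring
  · -- upper bound
    rintro k ⟨g, s, hs, rfl⟩
    rcases hs with rfl | rfl | rfl
    · have : ∃ y, g * sr 0 * g⁻¹ = sr y := by
        cases g with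
        | r i => rw [Stmt13Aux.inv_r, r_mul_sr, sr_mul_r]; exact ⟨_, rfl⟩
        | sr i => rw [Stmt13Aux.inv_sr, sr_mul_sr, r_mul_sr]; exact ⟨_, rfl⟩
      obtain ⟨y, hy⟩ := this
      rw [hy]
      exact srBound hn hd y
    · have : ∃ y, g * (r 1 * sr 0) * g⁻¹ = sr y := by
        rw [rs]
        cases g with
        | r i => rw [Stmt13Aux.inv_r, r_mul_sr, sr_mul_r]; exact ⟨_, rfl⟩
        | sr i => rw [Stmt13Aux.inv_sr, sr_mul_sr, r_mul_sr]; exact ⟨_, rfl⟩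
      obtain ⟨y, hy⟩ := this
      rw [hy]
      exact srBound hn hd y
    · rw [central hn hd g]
      calc wordLength (Sgen n) ((r 1 : DihedralGroup n) ^ (n / 2))
          ≤ 1 := by
            refine le_trans (wl_le [(r 1 : DihedralGroup n) ^ (n / 2)] ?_ ?_) (le_refl 1)
            · intro y hy
              rcases List.mem_singleton.mp hy with rfl
              simp [Sgen]
            · exact List.prod_singleton
        _ ≤ n / 2 := by omega
end

section
/- Let n be even, n ≥ 6, and S = {f, rf, r^{n/2}} in D_n. Then λ₂(D_n, S) = λ₁(D_n, S) = n/2. -/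
open DihedralGroup

namespace Stmt14Aux

/-- candidate word length of `r j` -/
def Nr (m j : ℕ) : ℕ := min (2*j) (min (2*(2*m-j)) (1 + 2*((m-j)+(j-m))))

/-- candidate word length of `sr j` -/
def Ns (m j : ℕ) : ℕ :=
  if j < m then min (2*j+1) (2*(m-j)) else min (2*(2*m-1-j)+1) (2*(j-m)+2)

lemma Ns_le (m j : ℕ) (hj : j < 2*m) : Ns m j ≤ m := by
  simp only [Ns]; split_ifs <;> omega

lemma L1 (m j : ℕ) (hj : j < 2*m) : Ns m j ≤ Nr m j + 1 := by
  simp only [Ns, Nr]; split_ifs <;> omega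

lemma L2 (m j : ℕ) (hj : j < 2*m) : Nr m j ≤ Ns m j + 1 := by
  simp only [Ns, Nr]; split_ifs <;> omega

lemma L3 (m j j' : ℕ) (hm : 3 ≤ m) (hj : j < 2*m) (hj' : j' < 2*m)
    (h : j' + 1 = j ∨ j' + 1 = j + 2*m) : Ns m j' ≤ Nr m j + 1 := by
  simp only [Ns, Nr]; split_ifs <;> omega

lemma L4 (m j j' : ℕ) (hm : 3 ≤ m) (hj : j < 2*m) (hj' : j' < 2*m)
    (h : j' = j + 1 ∨ j' + 2*m = j + 1) : Nr m j' ≤ Ns m j + 1 := by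
  simp only [Ns, Nr]; split_ifs <;> omega

lemma L5 (m j j' : ℕ) (hm : 3 ≤ m) (hj : j < 2*m) (hj' : j' < 2*m)
    (h : j' = j + m ∨ j' + 2*m = j + m) : Nr m j' ≤ Nr m j + 1 := by
  simp only [Nr]; omega

lemma L6 (m j j' : ℕ) (hm : 3 ≤ m) (hj : j < 2*m) (hj' : j' < 2*m)
    (h : j' = j + m ∨ j' + 2*m = j + m) : Ns m j' ≤ Ns m j + 1 := by
  simp only [Ns]; split_ifs <;> omega

/-- candidate length function on the group -/
def NN {n : ℕ} (m : ℕ) : DihedralGroup n → ℕ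
  | .r k => Nr m k.val
  | .sr k => Ns m k.val

lemma val_add_cases {n : ℕ} [NeZero n] (a b : ZMod n) :
    (a+b).val = a.val + b.val ∨ (a+b).val + n = a.val + b.val := by
  have h := ZMod.val_add a b
  have ha := ZMod.val_lt a
  have hb := ZMod.val_lt b
  rcases Nat.lt_or_ge (a.val + b.val) n with h1 | h1
  · left; rw [h, Nat.mod_eq_of_lt h1]
  · right
    rw [h, Nat.mod_eq_sub_mod h1, Nat.mod_eq_of_lt (by omega)]
    omega

section Main

variable {n m : ℕ}

lemma hval_m [NeZero n] (hn : n = 2*m) : ((m : ZMod n)).val = m := by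
  rw [ZMod.val_natCast, Nat.mod_eq_of_lt (by have : 0 < n := Nat.pos_of_ne_zero (NeZero.ne n); omega)]

lemma hval_neg_one [NeZero n] (hn : n = 2*m) (hm : 3 ≤ m) : ((-1 : ZMod n)).val = n - 1 := by
  have h1 : ((n - 1 : ℕ) : ZMod n) = -1 := by
    have h2 : ((n : ℕ) : ZMod n) = 0 := ZMod.natCast_self n
    rw [Nat.cast_sub (by omega), h2, Nat.cast_one]; ring
  rw [← h1, ZMod.val_cast_of_lt (by omega)]

lemma hval_one [NeZero n] (hn : n = 2*m) (hm : 3 ≤ m) : ((1 : ZMod n)).val = 1 := by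
  have : ((1 : ℕ) : ZMod n) = 1 := by push_cast; ring
  rw [← this, ZMod.val_cast_of_lt (by omega)]

lemma neg_m_eq [NeZero n] (hn : n = 2*m) : -(m : ZMod n) = (m : ZMod n) := by
  have h2m : ((2*m : ℕ) : ZMod n) = 0 := by rw [← hn]; exact ZMod.natCast_self n
  push_cast at h2m
  linear_combination -h2m

lemma key [NeZero n] (hn : n = 2*m) (hm : 3 ≤ m) :
    ∀ w : List (DihedralGroup n),
      (∀ x ∈ w, x ∈ ({sr 0, sr (-1), r (m : ZMod n)} : Set (DihedralGroup n))) →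
      NN m w.prod ≤ w.length := by
  intro w
  induction w with
  | nil =>
    intro _
    simp only [List.prod_nil, List.length_nil, one_def, NN]
    simp [Nr]
  | cons x w ih =>
    intro hmem
    have hx : x = sr 0 ∨ x = sr (-1) ∨ x = r (m : ZMod n) := by
      have := hmem x (by simp)
      simpa [Set.mem_insert_iff] using this
    have IH := ih (fun y hy => hmem y (List.mem_cons_of_mem _ hy))
    rw [List.prod_cons, List.length_cons]
    rcases hp : w.prod with k | k <;> rw [hp] at IH <;>
      simp only [NN] at IH <;>
      have hk : k.val < 2*m := hn ▸ ZMod.val_lt k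
    · -- w.prod = r k
      rcases hx with rfl | rfl | rfl
      · rw [sr_mul_r, zero_add]
        simp only [NN]
        have := L1 m k.val hk; omega
      · rw [sr_mul_r]
        have hc := val_add_cases (-1 : ZMod n) k
        rw [hval_neg_one hn hm] at hc
        have hlt : ((-1 : ZMod n) + k).val < 2*m := hn ▸ ZMod.val_lt _
        simp only [NN]
        have := L3 m k.val ((-1 : ZMod n) + k).val hm hk hlt (by omega)
        omega
      · rw [r_mul_r]
        have hc := val_add_cases (m : ZMod n) k
        rw [hval_m hn] at hc
        have hlt : ((m : ZMod n) + k).val < 2*m := hn ▸ ZMod.val_lt _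
        simp only [NN]
        have := L5 m k.val ((m : ZMod n) + k).val hm hk hlt (by omega)
        omega
    · -- w.prod = sr k
      rcases hx with rfl | rfl | rfl
      · rw [sr_mul_sr, sub_zero]
        simp only [NN]
        have := L2 m k.val hk; omega
      · rw [sr_mul_sr, sub_neg_eq_add]
        have hc := val_add_cases k (1 : ZMod n)
        rw [hval_one hn hm] at hc
        have hlt : (k + 1).val < 2*m := hn ▸ ZMod.val_lt _
        simp only [NN]
        have := L4 m k.val (k + 1).val hm hk hlt (by omega)
        omega
      · rw [r_mul_sr, sub_eq_add_neg, neg_m_eq hn]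
        have hc := val_add_cases k (m : ZMod n)
        rw [hval_m hn] at hc
        have hlt : (k + (m : ZMod n)).val < 2*m := hn ▸ ZMod.val_lt _
        simp only [NN]
        have := L6 m k.val (k + (m : ZMod n)).val hm hk hlt (by omega)
        omega

/-- word for `r t` : `(b a)^t` -/
def rotW (n : ℕ) : ℕ → List (DihedralGroup n)
  | 0 => []
  | t+1 => sr (-1) :: sr 0 :: rotW n t

/-- word for `r (-t)` : `(a b)^t` -/
def rotW' (n : ℕ) : ℕ → List (DihedralGroup n)
  | 0 => []
  | t+1 => sr 0 :: sr (-1) :: rotW' n t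

lemma rotW_length (t : ℕ) : (rotW n t).length = 2 * t := by
  induction t with
  | zero => rfl
  | succ t ih => simp only [rotW, List.length_cons, ih]; omega

lemma rotW'_length (t : ℕ) : (rotW' n t).length = 2 * t := by
  induction t with
  | zero => rfl
  | succ t ih => simp only [rotW', List.length_cons, ih]; omega

lemma rotW_mem (t : ℕ) :
    ∀ x ∈ rotW n t, x ∈ ({sr 0, sr (-1), r (m : ZMod n)} : Set (DihedralGroup n)) := by
  induction t with
  | zero => intro x hx; simp [rotW] at hx
  | succ t ih =>
    intro x hx
    simp only [rotW, List.mem_cons] at hx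
    rcases hx with rfl | rfl | hx
    · simp
    · simp
    · exact ih x hx

lemma rotW'_mem (t : ℕ) :
    ∀ x ∈ rotW' n t, x ∈ ({sr 0, sr (-1), r (m : ZMod n)} : Set (DihedralGroup n)) := by
  induction t with
  | zero => intro x hx; simp [rotW'] at hx
  | succ t ih =>
    intro x hx
    simp only [rotW', List.mem_cons] at hx
    rcases hx with rfl | rfl | hx
    · simp
    · simp
    · exact ih x hx

lemma rotW_prod (t : ℕ) : (rotW n t).prod = r ((t : ℕ) : ZMod n) := by
  induction t with
  | zero => simp [rotW]
  | succ t ih =>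
    simp only [rotW, List.prod_cons, ih, sr_mul_r, sr_mul_sr]
    congr 1
    push_cast
    ring

lemma rotW'_prod (t : ℕ) : (rotW' n t).prod = r (-((t : ℕ) : ZMod n)) := by
  induction t with
  | zero => simp [rotW']
  | succ t ih =>
    simp only [rotW', List.prod_cons, ih, sr_mul_r, sr_mul_sr]
    congr 1
    push_cast
    ring

lemma exists_word_sr [NeZero n] (hn : n = 2*m) (hm : 3 ≤ m) (k : ZMod n) :
    ∃ w : List (DihedralGroup n),
      (∀ x ∈ w, x ∈ ({sr 0, sr (-1), r (m : ZMod n)} : Set (DihedralGroup n))) ∧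
      w.prod = sr k ∧ w.length = Ns m k.val := by
  have hjlt : k.val < 2*m := hn ▸ ZMod.val_lt k
  have hk : ((k.val : ℕ) : ZMod n) = k := ZMod.natCast_rightInverse k
  have h2m : ((2*m : ℕ) : ZMod n) = 0 := by rw [← hn]; exact ZMod.natCast_self n
  push_cast at h2m
  by_cases h1 : k.val < m
  · by_cases h2 : 2*k.val+1 ≤ 2*(m-k.val)
    · refine ⟨sr 0 :: rotW n k.val, ?_, ?_, ?_⟩
      · intro x hx
        simp only [List.mem_cons] at hx
        rcases hx with rfl | hx
        · simp
        · exact rotW_mem _ x hx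
      · rw [List.prod_cons, rotW_prod, sr_mul_r, zero_add, hk]
      · simp only [List.length_cons, rotW_length, Ns, if_pos h1]
        omega
    · refine ⟨r (m : ZMod n) :: sr (-1) :: rotW' n (m-1-k.val), ?_, ?_, ?_⟩
      · intro x hx
        simp only [List.mem_cons] at hx
        rcases hx with rfl | rfl | hx
        · simp
        · simp
        · exact rotW'_mem _ x hx
      · rw [List.prod_cons, List.prod_cons, rotW'_prod, sr_mul_r, r_mul_sr]
        congr 1
        have e1 : ((m-1-k.val : ℕ) + k.val + 1 : ℕ) = m := by omega
        have e2 := congrArg (Nat.cast : ℕ → ZMod n) e1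
        push_cast at e2
        linear_combination -e2 + hk - h2m
      · simp only [List.length_cons, rotW'_length, Ns, if_pos h1]
        omega
  · by_cases h2 : 2*(k.val-m)+2 ≤ 2*(2*m-1-k.val)+1
    · refine ⟨r (m : ZMod n) :: sr 0 :: rotW n (k.val-m), ?_, ?_, ?_⟩
      · intro x hx
        simp only [List.mem_cons] at hx
        rcases hx with rfl | rfl | hx
        · simp
        · simp
        · exact rotW_mem _ x hx
      · rw [List.prod_cons, List.prod_cons, rotW_prod, sr_mul_r, r_mul_sr]
        congr 1
        have e1 : ((k.val-m : ℕ) + m : ℕ) = k.val := by omega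
        have e2 := congrArg (Nat.cast : ℕ → ZMod n) e1
        push_cast at e2
        linear_combination e2 - h2m + hk
      · simp only [List.length_cons, rotW_length, Ns, if_neg h1]
        omega
    · refine ⟨sr (-1) :: rotW' n (2*m-1-k.val), ?_, ?_, ?_⟩
      · intro x hx
        simp only [List.mem_cons] at hx
        rcases hx with rfl | hx
        · simp
        · exact rotW'_mem _ x hx
      · rw [List.prod_cons, rotW'_prod, sr_mul_r]
        congr 1
        have e1 : ((2*m-1-k.val : ℕ) + k.val + 1 : ℕ) = 2*m := by omega
        have e2 := congrArg (Nat.cast : ℕ → ZMod n) e1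
        push_cast at e2
        linear_combination -e2 + hk - h2m
      · simp only [List.length_cons, rotW'_length, Ns, if_neg h1]
        omega

lemma wl_sr [NeZero n] (hn : n = 2*m) (hm : 3 ≤ m) (k : ZMod n) :
    wordLength ({sr 0, sr (-1), r (m : ZMod n)} : Set (DihedralGroup n)) (sr k) = Ns m k.val := by
  obtain ⟨w, hw, hp, hl⟩ := exists_word_sr hn hm k
  unfold wordLength
  have hmem : Ns m k.val ∈ {j | ∃ l : List (DihedralGroup n),
      (∀ x ∈ l, x ∈ ({sr 0, sr (-1), r (m : ZMod n)} : Set (DihedralGroup n))) ∧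
      l.prod = sr k ∧ l.length = j} := ⟨w, hw, hp, hl⟩
  apply le_antisymm
  · exact Nat.sInf_le hmem
  · apply le_csInf ⟨Ns m k.val, hmem⟩
    rintro b ⟨l, hl1, hl2, rfl⟩
    have h := key hn hm l hl1
    rw [hl2] at h
    simpa only [NN] using h

lemma inv_r (i : ZMod n) : (r i : DihedralGroup n)⁻¹ = r (-i) := by
  apply inv_eq_of_mul_eq_one_right
  rw [r_mul_r, add_neg_cancel, ← one_def]

lemma inv_sr (i : ZMod n) : (sr i : DihedralGroup n)⁻¹ = sr i :=
  inv_eq_of_mul_eq_one_right (sr_mul_self i)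

lemma conj_sr (g : DihedralGroup n) (x : ZMod n) : ∃ y, g * sr x * g⁻¹ = sr y := by
  rcases g with t | t
  · exact ⟨x - t - t, by rw [inv_r, r_mul_sr, sr_mul_r]; congr 1; ring⟩
  · exact ⟨t - (x - t), by rw [inv_sr, sr_mul_sr, r_mul_sr]⟩

lemma conj_r (g : DihedralGroup n) (x : ZMod n) :
    g * r x * g⁻¹ = r x ∨ g * r x * g⁻¹ = r (-x) := by
  rcases g with t | t
  · left; rw [inv_r, r_mul_r, r_mul_r]; congr 1; ring
  · right; rw [inv_sr, sr_mul_r, sr_mul_sr]; congr 1; ring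

end Main

end Stmt14Aux

open Stmt14Aux in
theorem stmt14 (n : ℕ) (hn : 6 ≤ n) (heven : Even n) :
    letI S : Set (DihedralGroup n) := {sr 0, r 1 * sr 0, (r 1 : DihedralGroup n) ^ (n / 2)}
    IsGreatest {k | ∃ g : DihedralGroup n, ∃ s ∈ S, ∃ s' ∈ S,
        k = wordLength S (g * s * s' * g⁻¹)} (n / 2) ∧
      IsGreatest {k | ∃ g : DihedralGroup n, ∃ s ∈ S,
        k = wordLength S (g * s * g⁻¹)} (n / 2) := by
  obtain ⟨m, hm2⟩ := heven
  have hn2 : n = 2*m := by omega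
  have hm3 : 3 ≤ m := by omega
  have : NeZero n := ⟨by omega⟩
  have hdiv : n / 2 = m := by omega
  have hb : (r 1 : DihedralGroup n) * sr 0 = sr (-1) := by rw [r_mul_sr, zero_sub]
  have hc : (r 1 : DihedralGroup n) ^ (n / 2) = r (m : ZMod n) := by rw [hdiv, r_one_pow]
  have hS : ({sr 0, r 1 * sr 0, (r 1 : DihedralGroup n) ^ (n / 2)} : Set (DihedralGroup n))
      = {sr 0, sr (-1), r (m : ZMod n)} := by rw [hb, hc]
  set Sd : Set (DihedralGroup n) := {sr 0, sr (-1), r (m : ZMod n)} with hSd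
  -- basic upper bounds
  have h2m0 : ((2*m : ℕ) : ZMod n) = 0 := by rw [← hn2]; exact ZMod.natCast_self n
  push_cast at h2m0
  have ub_sr : ∀ g : DihedralGroup n, ∀ x : ZMod n, wordLength Sd (g * sr x * g⁻¹) ≤ m := by
    intro g x
    obtain ⟨y, hy⟩ := conj_sr g x
    rw [hy, wl_sr hn2 hm3]
    exact Ns_le m y.val (hn2 ▸ ZMod.val_lt y)
  have wl_r_le : ∀ x : ZMod n, (∃ w : List (DihedralGroup n),
      (∀ a ∈ w, a ∈ Sd) ∧ w.prod = r x ∧ w.length ≤ m) → wordLength Sd (r x) ≤ m := by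
    rintro x ⟨w, hw, hp, hl⟩
    exact le_trans (Nat.sInf_le ⟨w, hw, hp, rfl⟩) hl
  have ub_one : wordLength Sd (1 : DihedralGroup n) ≤ m := by
    rw [one_def]
    exact wl_r_le 0 ⟨[], by simp, by rw [List.prod_nil, one_def], by simp⟩
  have ub_r1 : wordLength Sd (r (1 : ZMod n)) ≤ m := by
    apply wl_r_le
    refine ⟨[sr (-1), sr 0], ?_, ?_, by simp only [List.length_cons, List.length_nil]; omega⟩
    · intro a ha; simp only [List.mem_cons] at ha
      rcases ha with rfl | rfl | h
      · simp [Sd]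
      · simp [Sd]
      · simp at h
    · simp only [List.prod_cons, List.prod_nil, mul_one, sr_mul_sr]
      congr 1; ring
  have ub_rneg1 : wordLength Sd (r (-1 : ZMod n)) ≤ m := by
    apply wl_r_le
    refine ⟨[sr 0, sr (-1)], ?_, ?_, by simp only [List.length_cons, List.length_nil]; omega⟩
    · intro a ha; simp only [List.mem_cons] at ha
      rcases ha with rfl | rfl | h
      · simp [Sd]
      · simp [Sd]
      · simp at h
    · simp only [List.prod_cons, List.prod_nil, mul_one, sr_mul_sr]
      congr 1; ring
  have ub_rm : wordLength Sd (r ((m : ℕ) : ZMod n)) ≤ m := by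
    apply wl_r_le
    refine ⟨[r (m : ZMod n)], ?_, by simp, by simp only [List.length_cons, List.length_nil]; omega⟩
    intro a ha; simp only [List.mem_cons] at ha
    rcases ha with rfl | h
    · simp [Sd]
    · simp at h
  have ub_conj_r : ∀ g : DihedralGroup n, ∀ x : ZMod n,
      wordLength Sd (r x) ≤ m → wordLength Sd (r (-x)) ≤ m →
      wordLength Sd (g * r x * g⁻¹) ≤ m := by
    intro g x h1 h2
    rcases conj_r g x with h | h <;> rw [h] <;> assumption
  -- witness values
  set t : ℕ := m / 2 with ht
  have hval_t : ((t : ℕ) : ZMod n).val = t := ZMod.val_cast_of_lt (by omega)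
  have hNst : Ns m t = m := by simp only [Ns]; split_ifs <;> omega
  have wl_witness : wordLength Sd (sr ((t : ℕ) : ZMod n)) = m := by
    rw [wl_sr hn2 hm3, hval_t, hNst]
  -- lambda_1 witness
  have wit1 : ∃ g : DihedralGroup n, ∃ s ∈ Sd, g * s * g⁻¹ = sr ((t : ℕ) : ZMod n) := by
    rcases Nat.even_or_odd t with hpar | hpar
    · -- conjugate of sr 0
      obtain ⟨u, hu⟩ := hpar
      refine ⟨r ((m - u : ℕ) : ZMod n), sr 0, by simp [Sd], ?_⟩
      rw [Stmt14Aux.inv_r, r_mul_sr, sr_mul_r]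
      congr 1
      have e1 : ((m - u : ℕ) + (m - u : ℕ) + t : ℕ) = 2*m := by omega
      have e2 := congrArg (Nat.cast : ℕ → ZMod n) e1
      push_cast at e2
      linear_combination -e2 - h2m0
    · -- conjugate of sr (-1)
      obtain ⟨u, hu⟩ := hpar
      refine ⟨r ((m - u - 1 : ℕ) : ZMod n), sr (-1), by simp [Sd], ?_⟩
      rw [Stmt14Aux.inv_r, r_mul_sr, sr_mul_r]
      congr 1
      have e1 : ((m - u - 1 : ℕ) + (m - u - 1 : ℕ) + t + 1 : ℕ) = 2*m := by omega
      have e2 := congrArg (Nat.cast : ℕ → ZMod n) e1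
      push_cast at e2
      linear_combination -e2 - h2m0
  -- lambda_2 witness : conjugate of (s * c) where c = r m
  have wit2 : ∃ g : DihedralGroup n, ∃ s ∈ Sd, ∃ s' ∈ Sd,
      g * s * s' * g⁻¹ = sr ((t : ℕ) : ZMod n) := by
    rcases Nat.even_or_odd (m - t) with hpar | hpar
    · -- m ≡ t (mod 2): use s = sr 0, s' = r m, s*s' = sr m
      obtain ⟨u, hu⟩ := hpar
      refine ⟨r ((u : ℕ) : ZMod n), sr 0, by simp [Sd], r (m : ZMod n), by simp [Sd], ?_⟩
      rw [Stmt14Aux.inv_r, r_mul_sr, sr_mul_r, sr_mul_r]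
      congr 1
      have e1 : ((u : ℕ) + u + t : ℕ) = m := by omega
      have e2 := congrArg (Nat.cast : ℕ → ZMod n) e1
      push_cast at e2
      linear_combination -e2
    · -- use s = sr (-1), s' = r m, s*s' = sr (m-1)
      obtain ⟨u, hu⟩ := hpar
      refine ⟨r ((u : ℕ) : ZMod n), sr (-1), by simp [Sd], r (m : ZMod n), by simp [Sd], ?_⟩
      rw [Stmt14Aux.inv_r, r_mul_sr, sr_mul_r, sr_mul_r]
      congr 1
      have e1 : ((u : ℕ) + u + t + 1 : ℕ) = m := by omega
      have e2 := congrArg (Nat.cast : ℕ → ZMod n) e1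
      push_cast at e2
      linear_combination -e2
  rw [hS, hdiv]
  constructor
  · constructor
    · obtain ⟨g, s, hs, s', hs', hgs⟩ := wit2
      exact ⟨g, s, hs, s', hs', by rw [hgs, wl_witness]⟩
    · rintro k ⟨g, s, hs, s', hs', rfl⟩
      have hss : g * s * s' * g⁻¹ = g * (s * s') * g⁻¹ := by group
      rw [hss]
      simp only [hSd, Set.mem_insert_iff, Set.mem_singleton_iff] at hs hs'
      rcases hs with rfl | rfl | rfl <;> rcases hs' with rfl | rfl | rfl
      · rw [sr_mul_sr, sub_zero]
        exact ub_conj_r g 0 (by simpa using ub_one) (by simpa using ub_one)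
      · rw [sr_mul_sr]
        refine ub_conj_r g _ ?_ ?_
        · simpa using ub_rneg1
        · simpa using ub_r1
      · rw [sr_mul_r]
        exact ub_sr g _
      · rw [sr_mul_sr, sub_neg_eq_add, zero_add]
        exact ub_conj_r g 1 ub_r1 ub_rneg1
      · rw [sr_mul_sr, sub_self]
        exact ub_conj_r g 0 (by simpa using ub_one) (by simpa using ub_one)
      · rw [sr_mul_r]
        exact ub_sr g _
      · rw [r_mul_sr]
        exact ub_sr g _
      · rw [r_mul_sr]
        exact ub_sr g _
      · rw [r_mul_r]
        refine ub_conj_r g _ ?_ ?_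
        · have : ((m : ZMod n)) + (m : ZMod n) = 0 := by linear_combination h2m0
          rw [this]
          simpa using ub_one
        · have : -(((m : ZMod n)) + (m : ZMod n)) = 0 := by linear_combination -h2m0
          rw [this]
          simpa using ub_one
  · constructor
    · obtain ⟨g, s, hs, hgs⟩ := wit1
      exact ⟨g, s, hs, by rw [hgs, wl_witness]⟩
    · rintro k ⟨g, s, hs, rfl⟩
      simp only [hSd, Set.mem_insert_iff, Set.mem_singleton_iff] at hs
      rcases hs with rfl | rfl | rfl
      · exact ub_sr g _
      · exact ub_sr g _
      · refine ub_conj_r g _ ub_rm ?_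
        have : -((m : ℕ) : ZMod n) = ((m : ℕ) : ZMod n) := neg_m_eq hn2
        rw [this]; exact ub_rm
end

section
/- Let n ≥ 3 and S = {f, r, r^{n-1}} in D_n. Then λ₁(D_n, S) = ⌊n/2⌋ + 1 if 4 divides n; λ₁(D_n, S) = ⌊n/2⌋ if n is even but 4 does not divide n; and λ₁(D_n, S) = ⌊n/2⌋ + 1 if n is odd. -/
open DihedralGroup

namespace Stmt15Aux

/-- The generating set. -/
def S' (n : ℕ) : Set (DihedralGroup n) := {sr 0, r 1, (r 1 : DihedralGroup n) ^ (n - 1)}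

/-- circular distance to 0 -/
def dd (n : ℕ) (a : ZMod n) : ℕ := min a.val (n - a.val)

/-- cost invariant -/
def cost (n : ℕ) : DihedralGroup n → ℕ
  | r a => dd n a
  | sr a => dd n a + 1

variable {n : ℕ}

lemma hr1 (hn : 3 ≤ n) : (r 1 : DihedralGroup n) ^ (n - 1) = r (-1) := by
  rw [r_one_pow]
  congr 1
  rw [Nat.cast_sub (by omega : 1 ≤ n), ZMod.natCast_self]
  ring

lemma dd_add_one (hn : 3 ≤ n) (a : ZMod n) : dd n (a + 1) ≤ dd n a + 1 := by
  haveI : NeZero n := ⟨by omega⟩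
  have hv : (a + 1).val = (a.val + 1) % n := by
    rw [ZMod.val_add, ZMod.val_one_eq_one_mod, Nat.mod_eq_of_lt (show (1:ℕ) < n by omega)]
  have hlt : a.val < n := ZMod.val_lt a
  simp only [dd, hv]
  rcases Nat.lt_or_ge (a.val + 1) n with h | h
  · rw [Nat.mod_eq_of_lt h]; omega
  · have he : a.val + 1 = n := by omega
    rw [he, Nat.mod_self]; omega

lemma dd_sub_one (hn : 3 ≤ n) (a : ZMod n) : dd n (a - 1) ≤ dd n a + 1 := by
  haveI : NeZero n := ⟨by omega⟩
  have hneg : (-1 : ZMod n).val = n - 1 := by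
    have h : ((n - 1 : ℕ) : ZMod n) = -1 := by
      rw [Nat.cast_sub (by omega : 1 ≤ n), ZMod.natCast_self]; ring
    rw [← h, ZMod.val_natCast, Nat.mod_eq_of_lt (by omega)]
  have hv : (a - 1).val = (a.val + (n - 1)) % n := by
    rw [sub_eq_add_neg, ZMod.val_add, hneg]
  have hlt : a.val < n := ZMod.val_lt a
  simp only [dd, hv]
  rcases eq_or_ne a.val 0 with h0 | h0
  · rw [h0, Nat.zero_add, Nat.mod_eq_of_lt (by omega)]; omega
  · have he : (a.val + (n - 1)) % n = a.val - 1 := by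
      rw [Nat.mod_eq_sub_mod (by omega), show a.val + (n - 1) - n = a.val - 1 by omega,
        Nat.mod_eq_of_lt (by omega)]
    rw [he]; omega

lemma cost_le (hn : 3 ≤ n) (l : List (DihedralGroup n))
    (hl : ∀ x ∈ l, x ∈ S' n) : cost n l.prod ≤ l.length := by
  induction l with
  | nil =>
    simp only [List.prod_nil, List.length_nil, one_def, cost, dd, ZMod.val_zero]
    omega
  | cons s t ih =>
    have hs : s ∈ S' n := hl s List.mem_cons_self
    have ht := ih fun x hx => hl x (List.mem_cons_of_mem s hx)
    rw [List.prod_cons, List.length_cons]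
    simp only [S', Set.mem_insert_iff, Set.mem_singleton_iff] at hs
    rcases hs with rfl | rfl | rfl
    · cases h : t.prod with
      | r a =>
        rw [h] at ht
        rw [sr_mul_r, zero_add]
        simp only [cost] at ht ⊢
        omega
      | sr a =>
        rw [h] at ht
        rw [sr_mul_sr, sub_zero]
        simp only [cost] at ht ⊢
        omega
    · cases h : t.prod with
      | r a =>
        rw [h] at ht
        rw [r_mul_r]
        simp only [cost] at ht ⊢
        have := dd_add_one hn a
        rw [add_comm] at this
        omega
      | sr a =>
        rw [h] at ht
        rw [r_mul_sr]
        simp only [cost] at ht ⊢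
        have := dd_sub_one hn a
        omega
    · rw [hr1 hn]
      cases h : t.prod with
      | r a =>
        rw [h] at ht
        rw [r_mul_r]
        simp only [cost] at ht ⊢
        have := dd_sub_one hn a
        rw [sub_eq_add_neg, add_comm] at this
        omega
      | sr a =>
        rw [h] at ht
        rw [r_mul_sr, sub_neg_eq_add]
        simp only [cost] at ht ⊢
        have := dd_add_one hn a
        omega

lemma wordLength_sr (hn : 3 ≤ n) (j : ZMod n) :
    wordLength (S' n) (sr j) = dd n j + 1 := by
  haveI : NeZero n := ⟨by omega⟩
  have hvlt : j.val < n := ZMod.val_lt j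
  have hmem : dd n j + 1 ∈ {k | ∃ l : List (DihedralGroup n),
      (∀ x ∈ l, x ∈ S' n) ∧ l.prod = sr j ∧ l.length = k} := by
    rcases le_or_gt j.val (n - j.val) with h | h
    · refine ⟨sr 0 :: List.replicate j.val (r 1), ?_, ?_, ?_⟩
      · intro x hx
        rcases List.mem_cons.1 hx with rfl | hx
        · exact Or.inl rfl
        · exact Or.inr (Or.inl (List.eq_of_mem_replicate hx))
      · rw [List.prod_cons, List.prod_replicate, r_one_pow, sr_mul_r, zero_add,
          ZMod.natCast_rightInverse j]
      · simp only [List.length_cons, List.length_replicate, dd]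
        omega
    · refine ⟨sr 0 :: List.replicate (n - j.val) ((r 1 : DihedralGroup n) ^ (n - 1)), ?_, ?_, ?_⟩
      · intro x hx
        rcases List.mem_cons.1 hx with rfl | hx
        · exact Or.inl rfl
        · exact Or.inr (Or.inr (List.eq_of_mem_replicate hx))
      · rw [List.prod_cons, List.prod_replicate, ← pow_mul, r_one_pow, sr_mul_r, zero_add]
        congr 1
        have hj : ((j.val : ℕ) : ZMod n) = j := ZMod.natCast_rightInverse j
        rw [Nat.cast_mul, Nat.cast_sub (by omega : 1 ≤ n), Nat.cast_sub hvlt.le,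
          ZMod.natCast_self, Nat.cast_one]
        linear_combination hj
      · simp only [List.length_cons, List.length_replicate, dd]
        omega
  refine le_antisymm (Nat.sInf_le hmem) (le_csInf ⟨_, hmem⟩ ?_)
  rintro b ⟨l, hl, hprod, rfl⟩
  have := cost_le hn l hl
  rw [hprod] at this
  simpa only [cost] using this

lemma wordLength_r_one_le (hn : 3 ≤ n) : wordLength (S' n) (r 1 : DihedralGroup n) ≤ 1 := by
  refine Nat.sInf_le ⟨[r 1], ?_, by simp, rfl⟩
  intro x hx
  rw [List.mem_singleton] at hx
  subst hx
  exact Or.inr (Or.inl rfl)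

lemma wordLength_r_neg_one_le (hn : 3 ≤ n) :
    wordLength (S' n) (r (-1) : DihedralGroup n) ≤ 1 := by
  refine Nat.sInf_le ⟨[(r 1 : DihedralGroup n) ^ (n - 1)], ?_, by simp [hr1 hn], rfl⟩
  intro x hx
  rw [List.mem_singleton] at hx
  subst hx
  exact Or.inr (Or.inr rfl)

lemma conj_sr (g : DihedralGroup n) :
    ∃ k : ZMod n, g⁻¹ * sr 0 * g = sr (k + k) := by
  cases g with
  | r k =>
    refine ⟨k, ?_⟩
    have h : (r k : DihedralGroup n)⁻¹ = r (-k) := rfl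
    rw [h, r_mul_sr, sr_mul_r]
    congr 1
    ring
  | sr k =>
    refine ⟨k, ?_⟩
    have h : (sr k : DihedralGroup n)⁻¹ = sr k := rfl
    rw [h, sr_mul_sr, r_mul_sr]
    congr 1
    ring

lemma conj_r (a : ZMod n) (g : DihedralGroup n) :
    g⁻¹ * r a * g = r a ∨ g⁻¹ * r a * g = r (-a) := by
  cases g with
  | r k =>
    left
    have h : (r k : DihedralGroup n)⁻¹ = r (-k) := rfl
    rw [h, r_mul_r, r_mul_r]
    congr 1
    ring
  | sr k =>
    right
    have h : (sr k : DihedralGroup n)⁻¹ = sr k := rfl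
    rw [h, sr_mul_r, sr_mul_sr]
    congr 1
    ring

lemma conj_val (hn : 3 ≤ n) (kn m : ℕ) (h2 : kn + kn = m) (hmn : m < n) :
    wordLength (S' n) ((r ((kn : ℕ) : ZMod n))⁻¹ * sr 0 * r ((kn : ℕ) : ZMod n))
      = min m (n - m) + 1 := by
  haveI : NeZero n := ⟨by omega⟩
  have hc : (r ((kn : ℕ) : ZMod n))⁻¹ * sr 0 * r ((kn : ℕ) : ZMod n)
      = sr ((m : ℕ) : ZMod n) := by
    have h : (r ((kn : ℕ) : ZMod n) : DihedralGroup n)⁻¹ = r (-((kn : ℕ) : ZMod n)) := rfl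
    rw [h, r_mul_sr, sr_mul_r]
    congr 1
    rw [← h2]
    push_cast
    ring
  rw [hc, wordLength_sr hn]
  simp only [dd, ZMod.val_natCast, Nat.mod_eq_of_lt hmn]

lemma dd_kk_le (hn : 3 ≤ n) (k : ZMod n) : dd n (k + k) ≤ n / 2 := by
  haveI : NeZero n := ⟨by omega⟩
  have := ZMod.val_lt (n := n) (k + k)
  simp only [dd]
  omega

lemma dd_kk_le' (hn : 3 ≤ n) (h2 : 2 ∣ n) (h4 : ¬ 4 ∣ n) (k : ZMod n) :
    dd n (k + k) + 1 ≤ n / 2 := by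
  haveI : NeZero n := ⟨by omega⟩
  have hv : (k + k).val = (k.val + k.val) % n := ZMod.val_add k k
  have hlt := ZMod.val_lt (n := n) (k + k)
  have hdvd : 2 ∣ (k + k).val := by
    rw [hv]
    rw [Nat.dvd_mod_iff h2]
    omega
  simp only [dd]
  omega

end Stmt15Aux

open Stmt15Aux

theorem stmt15 (n : ℕ) (hn : 3 ≤ n) :
    letI S : Set (DihedralGroup n) := {sr 0, r 1, (r 1 : DihedralGroup n) ^ (n - 1)}
    letI Λ : Set ℕ := {k | ∃ g : DihedralGroup n, ∃ s ∈ S,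
      k = wordLength S (g⁻¹ * s * g)}
    (4 ∣ n → IsGreatest Λ (n / 2 + 1)) ∧
      (2 ∣ n → ¬ 4 ∣ n → IsGreatest Λ (n / 2)) ∧
      (Odd n → IsGreatest Λ (n / 2 + 1)) := by
  have hub : ∀ B : ℕ, 1 ≤ B → (∀ k : ZMod n, dd n (k + k) + 1 ≤ B) →
      ∀ x ∈ {k | ∃ g : DihedralGroup n, ∃ s ∈ S' n,
        k = wordLength (S' n) (g⁻¹ * s * g)}, x ≤ B := by
    intro B hB1 hdd x hx
    obtain ⟨g, s, hs, rfl⟩ := hx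
    rcases hs with rfl | rfl | rfl
    · obtain ⟨k, hk⟩ := conj_sr g
      rw [hk, wordLength_sr hn]
      exact hdd k
    · rcases conj_r 1 g with h | h <;> rw [h]
      · exact le_trans (wordLength_r_one_le hn) hB1
      · exact le_trans (wordLength_r_neg_one_le hn) hB1
    · rw [hr1 hn]
      rcases conj_r (-1) g with h | h <;> rw [h]
      · exact le_trans (wordLength_r_neg_one_le hn) hB1
      · rw [neg_neg]
        exact le_trans (wordLength_r_one_le hn) hB1
  refine ⟨fun h4 => ?_, fun h2 h4 => ?_, fun hodd => ?_⟩
  · constructor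
    · refine ⟨r (((n / 4 : ℕ) : ZMod n)), sr 0, Or.inl rfl, ?_⟩
      exact (by omega : n / 2 + 1 = min (n / 2) (n - n / 2) + 1).trans
        (conj_val hn (n / 4) (n / 2) (by omega) (by omega)).symm
    · exact hub (n / 2 + 1) (by omega) (fun k => by have := dd_kk_le hn k; omega)
  · constructor
    · refine ⟨r ((((n - 2) / 4 : ℕ) : ZMod n)), sr 0, Or.inl rfl, ?_⟩
      exact (by omega : n / 2 = min (n / 2 - 1) (n - (n / 2 - 1)) + 1).trans
        (conj_val hn ((n - 2) / 4) (n / 2 - 1) (by omega) (by omega)).symm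
    · exact hub (n / 2) (by omega) (fun k => dd_kk_le' hn h2 h4 k)
  · have hodd' : ¬ 2 ∣ n := by
      rcases hodd with ⟨m, rfl⟩
      omega
    rcases Nat.lt_or_ge (n % 4) 2 with hm | hm
    · have h1 : n % 4 = 1 := by omega
      constructor
      · refine ⟨r ((((n - 1) / 4 : ℕ) : ZMod n)), sr 0, Or.inl rfl, ?_⟩
        exact (by omega : n / 2 + 1 = min ((n - 1) / 2) (n - (n - 1) / 2) + 1).trans
          (conj_val hn ((n - 1) / 4) ((n - 1) / 2) (by omega) (by omega)).symm
      · exact hub (n / 2 + 1) (by omega) (fun k => by have := dd_kk_le hn k; omega)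
    · have h3 : n % 4 = 3 := by omega
      constructor
      · refine ⟨r ((((n + 1) / 4 : ℕ) : ZMod n)), sr 0, Or.inl rfl, ?_⟩
        exact (by omega : n / 2 + 1 = min ((n + 1) / 2) (n - (n + 1) / 2) + 1).trans
          (conj_val hn ((n + 1) / 4) ((n + 1) / 2) (by omega) (by omega)).symm
      · exact hub (n / 2 + 1) (by omega) (fun k => by have := dd_kk_le hn k; omega)
end

section
/- Let n ≥ 3 and S = {f, r, r^{n-1}} in D_n. Then λ₂(D_n, S) = ⌊n/2⌋ if 4 divides n, and λ₂(D_n, S) = ⌊n/2⌋ + 1 if 4 does not divide n. -/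
open DihedralGroup

namespace Stmt16

variable {n : ℕ}

def Sset (n : ℕ) : Set (DihedralGroup n) := {sr 0, r 1, (r 1 : DihedralGroup n) ^ (n - 1)}

lemma inv_r (i : ZMod n) : (r i)⁻¹ = r (-i) :=
  inv_eq_of_mul_eq_one_right (by rw [r_mul_r, add_neg_cancel, one_def])

lemma inv_sr (i : ZMod n) : (sr i)⁻¹ = sr i :=
  inv_eq_of_mul_eq_one_right (sr_mul_self i)

lemma cast_sub_one (hn : 3 ≤ n) : ((n - 1 : ℕ) : ZMod n) = -1 := by
  push_cast [Nat.cast_sub (by omega : 1 ≤ n)]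
  simp

def dd (n : ℕ) (x : ZMod n) : ℕ := min x.val (n - x.val)

def NN : DihedralGroup n → ℕ
  | r m => dd n m
  | sr m => dd n m + 1

lemma dd_add_one (hn : 3 ≤ n) (x : ZMod n) : dd n (x + 1) ≤ dd n x + 1 := by
  haveI : NeZero n := ⟨by omega⟩
  haveI : Fact (1 < n) := ⟨by omega⟩
  have hv : x.val < n := ZMod.val_lt x
  have h := ZMod.val_add x 1
  rw [ZMod.val_one] at h
  unfold dd
  rcases Nat.lt_or_ge (x.val + 1) n with h1 | h1
  · rw [h, Nat.mod_eq_of_lt h1]; omega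
  · have : x.val + 1 = n := by omega
    rw [h, this, Nat.mod_self]; omega

lemma dd_sub_one (hn : 3 ≤ n) (x : ZMod n) : dd n (x - 1) ≤ dd n x + 1 := by
  haveI : NeZero n := ⟨by omega⟩
  have hv : x.val < n := ZMod.val_lt x
  have key : (x - 1).val = if x.val = 0 then n - 1 else x.val - 1 := by
    have h1 : x - 1 = x + ((n-1 : ℕ) : ZMod n) := by rw [cast_sub_one hn]; ring
    have h2 : ((n-1:ℕ) : ZMod n).val = n - 1 := ZMod.val_cast_of_lt (by omega)
    rw [h1, ZMod.val_add, h2]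
    split_ifs with h0
    · rw [h0, Nat.mod_eq_of_lt (by omega)]; omega
    · have : x.val + (n-1) = (x.val - 1) + n := by omega
      rw [this, Nat.add_mod_right, Nat.mod_eq_of_lt (by omega)]
  unfold dd
  rw [key]
  split_ifs with h0 <;> omega

lemma NN_mul_le (hn : 3 ≤ n) (a x : DihedralGroup n) (ha : a ∈ Sset n) :
    NN (a * x) ≤ NN x + 1 := by
  have hpow : (r 1 : DihedralGroup n) ^ (n - 1) = r (-1) := by
    rw [r_one_pow, cast_sub_one hn]
  rcases ha with rfl | rfl | rfl <;> rcases x with m | m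
  · simp only [sr_mul_r, zero_add, NN]; omega
  · simp only [sr_mul_sr, sub_zero, NN]; omega
  · simp only [r_mul_r, NN]
    have h : (1 : ZMod n) + m = m + 1 := by ring
    rw [h]; exact dd_add_one hn m
  · simp only [r_mul_sr, NN, sub_eq_add_neg]
    have : m + -1 = m - 1 := by ring
    rw [this]
    have := dd_sub_one hn m; omega
  · rw [hpow]
    simp only [r_mul_r, NN]
    have : -1 + m = m - 1 := by ring
    rw [this]; exact dd_sub_one hn m
  · rw [hpow]
    simp only [r_mul_sr, NN]
    have : m - -1 = m + 1 := by ring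
    rw [this]
    have := dd_add_one hn m; omega

lemma NN_one : NN (1 : DihedralGroup n) = 0 := by
  show NN (r 0) = 0
  simp [NN, dd, ZMod.val_zero]

lemma NN_list (hn : 3 ≤ n) (l : List (DihedralGroup n)) (hl : ∀ x ∈ l, x ∈ Sset n) :
    NN l.prod ≤ l.length := by
  induction l with
  | nil => simp [NN_one]
  | cons a t ih =>
    rw [List.prod_cons, List.length_cons]
    calc NN (a * t.prod) ≤ NN t.prod + 1 :=
          NN_mul_le hn a t.prod (hl a List.mem_cons_self)
      _ ≤ t.length + 1 := by
          have := ih (fun x hx => hl x (List.mem_cons_of_mem a hx)); omega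

lemma r1_mem : r 1 ∈ Sset n := Or.inr (Or.inl rfl)
lemma sr0_mem : sr 0 ∈ Sset n := Or.inl rfl
lemma rpow_mem : (r 1 : DihedralGroup n) ^ (n-1) ∈ Sset n := Or.inr (Or.inr rfl)

/-- word of `r k` with `k` copies of `r 1` -/
lemma word_r1 (k : ℕ) : ∃ l : List (DihedralGroup n), (∀ x ∈ l, x ∈ Sset n) ∧
    l.prod = r (k : ZMod n) ∧ l.length = k := by
  refine ⟨List.replicate k (r 1), ?_, ?_, List.length_replicate⟩
  · intro x hx; rw [List.mem_replicate] at hx; rw [hx.2]; exact r1_mem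
  · rw [List.prod_replicate, r_one_pow]

lemma cast_mul_eq (hn : 3 ≤ n) (k : ℕ) (hk : k ≤ n) :
    (((n-1)*(n-k) : ℕ) : ZMod n) = (k : ZMod n) := by
  push_cast [Nat.cast_sub (by omega : 1 ≤ n), Nat.cast_sub hk]
  rw [ZMod.natCast_self]
  ring

/-- word of `r k` with `n - k` copies of `r 1 ^ (n-1)` -/
lemma word_r2 (hn : 3 ≤ n) (k : ℕ) (hk : k ≤ n) : ∃ l : List (DihedralGroup n),
    (∀ x ∈ l, x ∈ Sset n) ∧ l.prod = r (k : ZMod n) ∧ l.length = n - k := by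
  refine ⟨List.replicate (n-k) ((r 1) ^ (n-1)), ?_, ?_, List.length_replicate⟩
  · intro x hx; rw [List.mem_replicate] at hx; rw [hx.2]; exact rpow_mem
  · rw [List.prod_replicate, ← pow_mul, r_one_pow, cast_mul_eq hn k hk]

lemma wl_r_le (hn : 3 ≤ n) (k : ℕ) (hk : k ≤ n) :
    wordLength (Sset n) (r (k : ZMod n)) ≤ min k (n - k) := by
  rcases le_total k (n-k) with h | h
  · rw [min_eq_left h]; exact Nat.sInf_le (word_r1 k)
  · rw [min_eq_right h]; exact Nat.sInf_le (word_r2 hn k hk)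

lemma wl_sr_eq (hn : 3 ≤ n) (m : ZMod n) :
    wordLength (Sset n) (sr m) = 1 + dd n m := by
  haveI : NeZero n := ⟨by omega⟩
  have hv : m.val < n := ZMod.val_lt m
  have hcast : ((m.val : ℕ) : ZMod n) = m := ZMod.natCast_rightInverse m
  -- two explicit words
  have w1 : ∀ k : ℕ, ∃ l : List (DihedralGroup n), (∀ x ∈ l, x ∈ Sset n) ∧
      l.prod = sr ((k : ℕ) : ZMod n) ∧ l.length = 1 + k := by
    intro k
    obtain ⟨l, h1, h2, h3⟩ := word_r1 (n := n) k
    refine ⟨sr 0 :: l, ?_, ?_, by simp [h3]; omega⟩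
    · intro x hx; rcases List.mem_cons.1 hx with rfl | hx
      · exact sr0_mem
      · exact h1 x hx
    · rw [List.prod_cons, h2, sr_mul_r, zero_add]
  have w2 : ∀ k : ℕ, k ≤ n → ∃ l : List (DihedralGroup n), (∀ x ∈ l, x ∈ Sset n) ∧
      l.prod = sr ((k : ℕ) : ZMod n) ∧ l.length = 1 + (n - k) := by
    intro k hk
    obtain ⟨l, h1, h2, h3⟩ := word_r2 hn k hk
    refine ⟨sr 0 :: l, ?_, ?_, by simp [h3]; omega⟩
    · intro x hx; rcases List.mem_cons.1 hx with rfl | hx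
      · exact sr0_mem
      · exact h1 x hx
    · rw [List.prod_cons, h2, sr_mul_r, zero_add]
  apply le_antisymm
  · unfold dd
    rcases le_total m.val (n - m.val) with h | h
    · rw [min_eq_left h]
      obtain ⟨l, h1, h2, h3⟩ := w1 m.val
      rw [hcast] at h2
      exact Nat.sInf_le ⟨l, h1, h2, h3⟩
    · rw [min_eq_right h]
      obtain ⟨l, h1, h2, h3⟩ := w2 m.val (le_of_lt hv)
      rw [hcast] at h2
      exact Nat.sInf_le ⟨l, h1, h2, h3⟩
  · apply le_csInf
    · obtain ⟨l, h1, h2, h3⟩ := w1 m.val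
      rw [hcast] at h2
      exact ⟨1 + m.val, l, h1, h2, h3⟩
    · rintro k ⟨l, h1, h2, h3⟩
      have := NN_list hn l h1
      rw [h2] at this
      simp only [NN] at this
      omega

lemma wl_sr_le (hn : 3 ≤ n) (m : ZMod n) :
    wordLength (Sset n) (sr m) ≤ 1 + dd n m := le_of_eq (wl_sr_eq hn m)

lemma wl_one_le : wordLength (Sset n) 1 ≤ 0 :=
  Nat.sInf_le ⟨[], by simp, by simp, rfl⟩
lemma val_odd (hn : 3 ≤ n) (h2 : 2 ∣ n) (j : ZMod n) : (1 + 2*j).val % 2 = 1 := by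
  haveI : NeZero n := ⟨by omega⟩
  set v := (1 + 2*j).val with hv
  have h : ((v : ℕ) : ZMod 2) = 1 := by
    rw [hv, ZMod.natCast_val]
    rw [← ZMod.castHom_apply (m := 2) (h := h2)]
    rw [map_add, map_mul, map_one, map_ofNat]
    have h20 : (2 : ZMod 2) = 0 := rfl
    rw [h20, zero_mul, add_zero]
  have : ((v % 2 : ℕ) : ZMod 2) = 1 := by rw [ZMod.natCast_mod]; exact h
  rcases (by omega : v % 2 = 0 ∨ v % 2 = 1) with h | h
  · rw [h] at this; exact absurd this (by decide)
  · exact h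

lemma sr_bound (hn : 3 ≤ n) (j : ZMod n) :
    wordLength (Sset n) (sr (1 + 2*j)) ≤ if 4 ∣ n then n/2 else n/2 + 1 := by
  haveI : NeZero n := ⟨by omega⟩
  refine le_trans (wl_sr_le hn _) ?_
  have hv : (1+2*j).val < n := ZMod.val_lt _
  unfold dd
  split_ifs with h4
  · have hodd := val_odd hn (dvd_trans ⟨2, rfl⟩ h4) j
    obtain ⟨t, rfl⟩ := h4
    omega
  · omega

lemma conj_sr_le (hn : 3 ≤ n) (g : DihedralGroup n) (c : ZMod n)
    (hc : ∃ j : ZMod n, c = 1 + 2*j) :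
    wordLength (Sset n) (g⁻¹ * sr c * g) ≤ if 4 ∣ n then n/2 else n/2 + 1 := by
  obtain ⟨j, rfl⟩ := hc
  rcases g with i | i
  · have h : (r i)⁻¹ * sr (1+2*j) * r i = sr (1 + 2*(j+i)) := by
      rw [inv_r]; simp only [r_mul_sr, sr_mul_r]; congr 1; ring
    rw [h]; exact sr_bound hn _
  · have h : (sr i)⁻¹ * sr (1+2*j) * sr i = sr (1 + 2*(i - j - 1)) := by
      rw [inv_sr]; simp only [sr_mul_sr, r_mul_sr]; congr 1; ring
    rw [h]; exact sr_bound hn _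

lemma wl_r2_le (hn : 3 ≤ n) : wordLength (Sset n) (r (2 : ZMod n)) ≤ 2 := by
  have h : ((2:ℕ) : ZMod n) = (2 : ZMod n) := by norm_cast
  have := wl_r_le hn 2 (by omega)
  rw [h] at this
  exact le_trans this (by omega)

lemma wl_rneg2_le (hn : 3 ≤ n) : wordLength (Sset n) (r (-2 : ZMod n)) ≤ 2 := by
  have h : ((n-2:ℕ) : ZMod n) = (-2 : ZMod n) := by
    push_cast [Nat.cast_sub (by omega : 2 ≤ n)]
    rw [ZMod.natCast_self]; ring
  have := wl_r_le hn (n-2) (by omega)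
  rw [h] at this
  exact le_trans this (le_trans (min_le_right _ _) (by omega))

lemma conj_r_le (hn : 3 ≤ n) (g : DihedralGroup n) (c : ZMod n)
    (hc : c = 2 ∨ c = -2) :
    wordLength (Sset n) (g⁻¹ * r c * g) ≤ 2 := by
  have key : g⁻¹ * r c * g = r c ∨ g⁻¹ * r c * g = r (-c) := by
    rcases g with i | i
    · left; rw [inv_r]; simp only [r_mul_r]; congr 1; ring
    · right; rw [inv_sr]; simp only [sr_mul_r, sr_mul_sr]; congr 1; ring
  rcases key with h | h <;> rw [h] <;> rcases hc with rfl | rfl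
  · exact wl_r2_le hn
  · exact wl_rneg2_le hn
  · exact wl_rneg2_le hn
  · rw [neg_neg]; exact wl_r2_le hn

lemma main_ub (hn : 3 ≤ n) (g s s' : DihedralGroup n)
    (hs : s ∈ Sset n) (hs' : s' ∈ Sset n) :
    wordLength (Sset n) (g⁻¹ * (s * s') * g) ≤ if 4 ∣ n then n/2 else n/2 + 1 := by
  have hB2 : 2 ≤ (if 4 ∣ n then n/2 else n/2 + 1) := by
    split_ifs with h <;> omega
  have hpow : (r 1 : DihedralGroup n) ^ (n - 1) = r (-1) := by
    rw [r_one_pow, cast_sub_one hn]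
  have hone : ∀ x : DihedralGroup n, x = 1 →
      wordLength (Sset n) (g⁻¹ * x * g) ≤ if 4 ∣ n then n/2 else n/2 + 1 := by
    rintro x rfl
    rw [mul_one, inv_mul_cancel]
    exact le_trans wl_one_le (by omega)
  rcases hs with rfl | rfl | rfl <;> rcases hs' with rfl | rfl | rfl
  · exact hone _ (sr_mul_self 0)
  · rw [sr_mul_r, zero_add]
    exact le_trans (conj_sr_le hn g 1 ⟨0, by ring⟩) (le_refl _)
  · rw [hpow, sr_mul_r, zero_add]
    exact conj_sr_le hn g (-1) ⟨-1, by ring⟩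
  · rw [r_mul_sr, zero_sub]
    exact conj_sr_le hn g (-1) ⟨-1, by ring⟩
  · rw [r_mul_r]
    have h11 : (1 : ZMod n) + 1 = 2 := by ring
    rw [h11]
    exact le_trans (conj_r_le hn g 2 (Or.inl rfl)) hB2
  · rw [hpow, r_mul_r]
    apply hone
    have : (1 : ZMod n) + -1 = 0 := by ring
    rw [this, ← one_def]
  · rw [hpow, r_mul_sr, zero_sub, neg_neg]
    exact conj_sr_le hn g 1 ⟨0, by ring⟩
  · rw [hpow, r_mul_r]
    apply hone
    have : (-1 : ZMod n) + 1 = 0 := by ring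
    rw [this, ← one_def]
  · rw [hpow, r_mul_r]
    have : (-1 : ZMod n) + -1 = -2 := by ring
    rw [this]
    exact le_trans (conj_r_le hn g (-2) (Or.inr rfl)) hB2

lemma mem_calc (hn : 3 ≤ n) (i : ℕ) (hlt : 1 + 2*i < n) :
    wordLength (Sset n) ((r (i : ZMod n))⁻¹ * (sr 0 * r 1) * r (i : ZMod n))
      = 1 + min (1+2*i) (n - (1+2*i)) := by
  haveI : NeZero n := ⟨by omega⟩
  have h : (r (i : ZMod n))⁻¹ * (sr 0 * r 1) * r (i : ZMod n)
      = sr (((1+2*i : ℕ)) : ZMod n) := by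
    rw [inv_r]
    simp only [sr_mul_r, zero_add, r_mul_sr]
    congr 1
    push_cast
    ring
  rw [h, wl_sr_eq hn]
  unfold dd
  rw [ZMod.val_cast_of_lt hlt]

end Stmt16

theorem stmt16 (n : ℕ) (hn : 3 ≤ n) :
    letI S : Set (DihedralGroup n) := {sr 0, r 1, (r 1 : DihedralGroup n) ^ (n - 1)}
    letI Λ : Set ℕ := {k | ∃ g : DihedralGroup n, ∃ s ∈ S, ∃ s' ∈ S,
      k = wordLength S (g⁻¹ * (s * s') * g)}
    (4 ∣ n → IsGreatest Λ (n / 2)) ∧ (¬ 4 ∣ n → IsGreatest Λ (n / 2 + 1)) := by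
  haveI : NeZero n := ⟨by omega⟩
  constructor
  · intro h4
    constructor
    · refine ⟨r ((n/4 : ℕ) : ZMod n), sr 0, Or.inl rfl, r 1, Or.inr (Or.inl rfl), ?_⟩
      show n/2 = wordLength (Stmt16.Sset n) _
      rw [Stmt16.mem_calc hn (n/4) (by omega)]
      omega
    · rintro k ⟨g, s, hs, s', hs', rfl⟩
      have h := Stmt16.main_ub hn g s s' hs hs'
      rw [if_pos h4] at h
      exact h
  · intro h4
    constructor
    · obtain ⟨i, hi1, hi2⟩ : ∃ i : ℕ, 1 + 2*i < n ∧ 1 + min (1+2*i) (n - (1+2*i)) = n/2 + 1 := by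
        rcases (by omega : n % 4 = 1 ∨ n % 4 = 2 ∨ n % 4 = 3) with h | h | h
        · exact ⟨(n-1)/4, by omega, by omega⟩
        · exact ⟨(n-2)/4, by omega, by omega⟩
        · exact ⟨(n-3)/4, by omega, by omega⟩
      refine ⟨r ((i : ℕ) : ZMod n), sr 0, Or.inl rfl, r 1, Or.inr (Or.inl rfl), ?_⟩
      show n/2 + 1 = wordLength (Stmt16.Sset n) _
      rw [Stmt16.mem_calc hn i hi1]
      omega
    · rintro k ⟨g, s, hs, s', hs', rfl⟩
      have h := Stmt16.main_ub hn g s s' hs hs'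
      rw [if_neg h4] at h
      exact h
end

section
/- Let n > 2 and S = {f, rf, r²f} in D_n. Then S generates D_n and λ₁(D_n, S) ≤ ⌊n/2⌋ + 1. -/
open DihedralGroup

namespace Stmt17Aux

variable {n : ℕ}

theorem inv_r (i : ZMod n) : (r i : DihedralGroup n)⁻¹ = r (-i) := rfl

theorem inv_sr (i : ZMod n) : (sr i : DihedralGroup n)⁻¹ = sr i := rfl

/-- A length-2 word over `{sr 0, sr (-1), sr (-2)}` whose product is `r d`, for
`d ∈ {-2,-1,0,1,2}`. -/
def pairFor (n : ℕ) (d : ℤ) : List (DihedralGroup n) :=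
  if d = 1 then [r 1 * sr 0, sr 0]
  else if d = -1 then [sr 0, r 1 * sr 0]
  else if d = 2 then [(r 1 : DihedralGroup n) ^ 2 * sr 0, sr 0]
  else if d = -2 then [sr 0, (r 1 : DihedralGroup n) ^ 2 * sr 0]
  else [sr 0, sr 0]

theorem pairFor_length (d : ℤ) : (pairFor n d).length = 2 := by
  unfold pairFor
  split_ifs <;> rfl

theorem pairFor_mem (d : ℤ) :
    ∀ x ∈ pairFor n d,
      x ∈ ({sr 0, r 1 * sr 0, (r 1 : DihedralGroup n) ^ 2 * sr 0} : Set (DihedralGroup n)) := by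
  unfold pairFor
  split_ifs <;> intro x hx <;> simp_all <;> tauto

theorem pairFor_prod (d : ℤ) (hd : |d| ≤ 2) :
    (pairFor n d).prod = r ((d : ZMod n)) := by
  have h2 : ((r 1 : DihedralGroup n) ^ 2) = r 2 := by
    rw [r_one_pow]; norm_num
  unfold pairFor
  have : d = -2 ∨ d = -1 ∨ d = 0 ∨ d = 1 ∨ d = 2 := by rw [abs_le] at hd; omega
  rcases this with rfl | rfl | rfl | rfl | rfl <;>
    simp [h2, List.prod_cons, sub_eq_add_neg]

/-- A length-`2k` word over the generators whose product is `r t` for `|t| ≤ 2k`. -/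
def mkWord (n : ℕ) : ℕ → ℤ → List (DihedralGroup n)
  | 0, _ => []
  | (k+1), t => pairFor n (max (-2) (min 2 t)) ++ mkWord n k (t - max (-2) (min 2 t))

theorem mkWord_length (k : ℕ) (t : ℤ) : (mkWord n k t).length = 2 * k := by
  induction k generalizing t with
  | zero => rfl
  | succ k ih => simp [mkWord, pairFor_length, ih]; ring

theorem mkWord_mem (k : ℕ) (t : ℤ) :
    ∀ x ∈ mkWord n k t,
      x ∈ ({sr 0, r 1 * sr 0, (r 1 : DihedralGroup n) ^ 2 * sr 0} : Set (DihedralGroup n)) := by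
  induction k generalizing t with
  | zero => intro x hx; simp [mkWord] at hx
  | succ k ih =>
    intro x hx
    simp only [mkWord, List.mem_append] at hx
    rcases hx with hx | hx
    · exact pairFor_mem _ x hx
    · exact ih _ x hx

theorem mkWord_prod (k : ℕ) (t : ℤ) (ht : |t| ≤ 2 * k) :
    (mkWord n k t).prod = r ((t : ZMod n)) := by
  induction k generalizing t with
  | zero =>
    have : t = 0 := by rw [abs_le] at ht; omega
    subst this; simp [mkWord]
  | succ k ih =>
    set d := max (-2) (min 2 t) with hd
    have hcases : (2 ≤ t ∧ d = 2) ∨ (t ≤ -2 ∧ d = -2) ∨ ((-2 < t ∧ t < 2) ∧ d = t) := by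
      rcases le_or_gt 2 t with h | h
      · exact Or.inl ⟨h, by rw [hd, min_eq_left h, max_eq_right (by omega)]⟩
      · rcases le_or_gt t (-2) with h2 | h2
        · exact Or.inr (Or.inl ⟨h2, by rw [hd, min_eq_right (by omega), max_eq_left h2]⟩)
        · exact Or.inr (Or.inr ⟨⟨h2, h⟩, by rw [hd, min_eq_right h.le, max_eq_right (by omega)]⟩)
    rw [abs_le] at ht
    have hdabs : |d| ≤ 2 := by
      rw [abs_le]; rcases hcases with ⟨h1,h2⟩|⟨h1,h2⟩|⟨h1,h2⟩ <;> omega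
    have hrec : |t - d| ≤ 2 * k := by
      rw [abs_le]; push_cast at ht ⊢
      rcases hcases with ⟨h1,h2⟩|⟨h1,h2⟩|⟨h1,h2⟩ <;> omega
    simp only [mkWord, List.prod_append]
    rw [← hd, pairFor_prod d hdabs, ih _ hrec, r_mul_r]
    congr 1
    push_cast
    ring

end Stmt17Aux

open Stmt17Aux in
theorem stmt17 (n : ℕ) (hn : 2 < n) :
    letI S : Set (DihedralGroup n) :=
      {sr 0, r 1 * sr 0, (r 1 : DihedralGroup n) ^ 2 * sr 0}
    Subgroup.closure S = ⊤ ∧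
      ∀ g : DihedralGroup n, ∀ s ∈ S, wordLength S (g * s * g⁻¹) ≤ n / 2 + 1 := by
  set S : Set (DihedralGroup n) := {sr 0, r 1 * sr 0, (r 1 : DihedralGroup n) ^ 2 * sr 0}
    with hS
  haveI : NeZero n := ⟨by omega⟩
  have hsr0 : (sr 0 : DihedralGroup n) ∈ S := by rw [hS]; left; rfl
  have hsr1 : (r 1 * sr 0 : DihedralGroup n) ∈ S := by rw [hS]; right; left; rfl
  have hsr2 : ((r 1 : DihedralGroup n) ^ 2 * sr 0) ∈ S := by rw [hS]; right; right; rfl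
  constructor
  · -- closure = ⊤
    rw [eq_top_iff]
    intro g _
    have hr1 : (r 1 : DihedralGroup n) ∈ Subgroup.closure S := by
      have : (r 1 : DihedralGroup n) = (r 1 * sr 0) * sr 0 := by
        rw [mul_assoc, sr_mul_sr, sub_self, ← one_def, mul_one]
      rw [this]
      exact mul_mem (Subgroup.subset_closure hsr1) (Subgroup.subset_closure hsr0)
    have hri : ∀ i : ZMod n, (r i : DihedralGroup n) ∈ Subgroup.closure S := by
      intro i
      have : (r i : DihedralGroup n) = (r 1) ^ (i.val) := by
        rw [r_one_pow, ZMod.natCast_val, ZMod.cast_id]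
      rw [this]
      exact pow_mem hr1 _
    cases g with
    | r i => exact hri i
    | sr i =>
      have : (sr i : DihedralGroup n) = r (-i) * sr 0 := by
        rw [r_mul_sr, zero_sub, neg_neg]
      rw [this]
      exact mul_mem (hri _) (Subgroup.subset_closure hsr0)
  · -- conjugates have short words
    have key : ∀ m : ZMod n, wordLength S (sr m) ≤ n / 2 + 1 := by
      intro m
      set k : ℕ := n / 4 with hk
      have hk2 : 2 * k ≤ n / 2 := by omega
      have hn4 : n ≤ 4 * k + 3 := by omega
      have hv : m.val < n := ZMod.val_lt m
      -- find head generator and integer t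
      have main : ∃ W : List (DihedralGroup n),
          (∀ x ∈ W, x ∈ S) ∧ W.prod = sr m ∧ W.length = 2 * k + 1 := by
        by_cases hc : m.val ≤ 2 * k
        · refine ⟨sr 0 :: mkWord n k (m.val : ℤ), ?_, ?_, ?_⟩
          · intro x hx
            rcases List.mem_cons.mp hx with rfl | hx
            · exact hsr0
            · exact mkWord_mem k _ x hx
          · rw [List.prod_cons, mkWord_prod k _ (by rw [abs_le]; omega), sr_mul_r, zero_add]
            congr 1
            push_cast [ZMod.natCast_val, ZMod.cast_id]
            ring
          · simp [mkWord_length]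
        · -- m.val > 2k, use w = n - m.val ∈ [1, 2k+2]
          set w : ℕ := n - m.val with hw
          have hw1 : 1 ≤ w := by omega
          have hw2 : w ≤ 2 * k + 2 := by omega
          have hcast : ∀ c : ℤ, ((c - w : ℤ) : ZMod n) - c = m := by
            intro c
            have hwn : ((w : ℕ) : ZMod n) = -m := by
              rw [hw, Nat.cast_sub hv.le, ZMod.natCast_self, ZMod.natCast_val, ZMod.cast_id,
                zero_sub]
            push_cast
            rw [hwn]
            ring
          by_cases hw3 : w ≤ 2 * k
          · refine ⟨sr 0 :: mkWord n k (-(w : ℤ)), ?_, ?_, ?_⟩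
            · intro x hx
              rcases List.mem_cons.mp hx with rfl | hx
              · exact hsr0
              · exact mkWord_mem k _ x hx
            · rw [List.prod_cons, mkWord_prod k _ (by rw [abs_le]; omega), sr_mul_r, zero_add]
              have := hcast 0
              simp only [zero_sub, sub_zero] at this
              rw [← this]
              push_cast
              ring_nf
            · simp [mkWord_length]
          · by_cases hw4 : w = 2 * k + 1
            · refine ⟨(r 1 * sr 0) :: mkWord n k (1 - (w : ℤ)), ?_, ?_, ?_⟩
              · intro x hx
                rcases List.mem_cons.mp hx with rfl | hx
                · exact hsr1
                · exact mkWord_mem k _ x hx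
              · rw [List.prod_cons, mkWord_prod k _ (by rw [abs_le]; omega), r_mul_sr, zero_sub,
                  sr_mul_r]
                have := hcast 1
                rw [← this]
                congr 1
                push_cast
                ring
              · simp [mkWord_length]
            · have hw5 : w = 2 * k + 2 := by omega
              refine ⟨((r 1 : DihedralGroup n) ^ 2 * sr 0) :: mkWord n k (2 - (w : ℤ)), ?_, ?_, ?_⟩
              · intro x hx
                rcases List.mem_cons.mp hx with rfl | hx
                · exact hsr2
                · exact mkWord_mem k _ x hx
              · have h2 : ((r 1 : DihedralGroup n) ^ 2) = r 2 := by
                  rw [r_one_pow]; norm_num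
                rw [List.prod_cons, mkWord_prod k _ (by rw [abs_le]; omega), h2, r_mul_sr, zero_sub,
                  sr_mul_r]
                have := hcast 2
                rw [← this]
                congr 1
                push_cast
                ring
              · simp [mkWord_length]
      obtain ⟨W, hWmem, hWprod, hWlen⟩ := main
      have : wordLength S (sr m) ≤ 2 * k + 1 :=
        Nat.sInf_le ⟨W, hWmem, hWprod, hWlen⟩
      omega
    intro g s hs
    have : ∃ m : ZMod n, g * s * g⁻¹ = sr m := by
      have hs' : ∃ c : ZMod n, s = sr c := by
        rw [hS] at hs
        rcases hs with rfl | rfl | rfl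
        · exact ⟨0, rfl⟩
        · exact ⟨0 - 1, by rw [r_mul_sr]⟩
        · have h2 : ((r 1 : DihedralGroup n) ^ 2) = r 2 := by
            rw [r_one_pow]; norm_num
          exact ⟨0 - 2, by rw [h2, r_mul_sr]⟩
      obtain ⟨c, rfl⟩ := hs'
      cases g with
      | r j => exact ⟨c - j - j, by rw [r_mul_sr, Stmt17Aux.inv_r, sr_mul_r]; ring_nf⟩
      | sr j => exact ⟨j - (c - j), by rw [sr_mul_sr, Stmt17Aux.inv_sr, r_mul_sr]⟩
    obtain ⟨m, hm⟩ := this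
    rw [hm]
    exact key m
end
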